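/- arXiv:2408.10626 — 5 statements merged into one kernel-verified Lean document; each statement's English description precedes it below -/
import Mathlib

section
/- Let B be a β-set with e-quotient (B_0, …, B_{e−1}). Then for every i ∈ {0, …, e−1}, δ_i(B) = s(B_i) − s(B_{i−1}) − [i = 0], where the index i − 1 is taken modulo e (so B_{−1} means B_{e−1}) and [i = 0] equals 1 if i = 0 and 0 otherwise. -/
/-- A β-set: a subset of ℤ having a maximum element, whose complement has a minimum element. -/
def IsBetaSet (B : Set ℤ) : Prop :=
  (∃ m ∈ B, ∀ x ∈ B, x ≤ m) ∧ (∃ m, m ∉ B ∧ ∀ x, x ∉ B → m ≤ x)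

/-- The charge s(B) = |B ∩ ℤ≥0| − |ℤ<0 ∖ B| of a β-set. -/
noncomputable def charge (B : Set ℤ) : ℤ :=
  ((B ∩ {x : ℤ | 0 ≤ x}).ncard : ℤ) - (({x : ℤ | x < 0} \ B).ncard : ℤ)

/-- B^{+k} = {x + k : x ∈ B}. -/
def shiftSet (B : Set ℤ) (k : ℤ) : Set ℤ := (fun x => x + k) '' B

/-- δ_i(B) for i ∈ ℤ/eℤ. -/
noncomputable def deltaOf (e : ℕ) (i : ZMod e) (B : Set ℤ) : ℤ :=
  ({x : ℤ | x ∈ B ∧ (x : ZMod e) = i ∧ x - 1 ∉ B}.ncard : ℤ)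
    - ({x : ℤ | x ∈ B ∧ (x : ZMod e) = i - 1 ∧ x + 1 ∉ B}.ncard : ℤ)

/-- The i-th component B_i = {a : ae + i ∈ B} of the e-quotient of B. -/
def quotComp (e : ℕ) (B : Set ℤ) (i : ℕ) : Set ℤ :=
  {a : ℤ | a * (e : ℤ) + (i : ℤ) ∈ B}

/-- The e-core of B: ⋃_{i<e} {ae + i : a < s(B_i)}. -/
noncomputable def coreSet (e : ℕ) (B : Set ℤ) : Set ℤ :=
  {x : ℤ | ∃ i < e, ∃ a : ℤ, a < charge (quotComp e B i) ∧ x = a * (e : ℤ) + (i : ℤ)}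

/-- The e-weight of B: for each quotient component C = B_i, the a-th term
b_{ia} − s(C) + a equals the number of y ∉ C below the a-th bead b_{ia}, so the inner sum
counts the pairs (x, y) with x ∈ C, y ∉ C, y < x. -/
noncomputable def wtSet (e : ℕ) (B : Set ℤ) : ℕ :=
  ∑ i ∈ Finset.range e,
    {p : ℤ × ℤ | p.1 ∈ quotComp e B i ∧ p.2 ∉ quotComp e B i ∧ p.2 < p.1}.ncard

/-- υ_j(ae + b) = aeℓ + (ℓ−j)e + b. -/
def upsilon (e ℓ j : ℕ) (x : ℤ) : ℤ :=
  (x - x % (e : ℤ)) * (ℓ : ℤ) + ((ℓ : ℤ) - (j : ℤ)) * (e : ℤ) + x % (e : ℤ)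

/-- The Uglov map U(B^{(1)}, …, B^{(ℓ)}) = ⋃_j υ_j(B^{(j)}) (the j-th component of the
tuple, indexed by Fin ℓ, is B^{(j+1)} of the paper). -/
def uglovU (e ℓ : ℕ) (B : Fin ℓ → Set ℤ) : Set ℤ :=
  ⋃ j : Fin ℓ, upsilon e ℓ (j.1 + 1) '' (B j)

/-- A partition, as a weakly decreasing eventually-zero function ℕ → ℕ
(the value at a being λ_{a+1}). -/
def IsPartitionFun (p : ℕ → ℕ) : Prop :=
  (∀ a b : ℕ, a ≤ b → p b ≤ p a) ∧ ∃ N, ∀ n, N ≤ n → p n = 0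

/-- β_t(λ) = {λ_a + t − a : a ≥ 1}. -/
def betaOf (p : ℕ → ℕ) (t : ℤ) : Set ℤ :=
  {x : ℤ | ∃ a : ℕ, x = (p a : ℤ) + t - ((a : ℤ) + 1)}

-- β⁻¹(B): the unique partition λ with β_{s(B)}(λ) = B (junk value if none exists).
open Classical in
noncomputable def betaInv (B : Set ℤ) : ℕ → ℕ :=
  if h : ∃ p : ℕ → ℕ, IsPartitionFun p ∧ betaOf p (charge B) = B then h.choose
  else fun _ => 0

/-- U(β_t(λ)) for an ℓ-partition λ and multicharge t. -/
def uglovMulti (e ℓ : ℕ) (Λ : Fin ℓ → ℕ → ℕ) (t : Fin ℓ → ℤ) : Set ℤ :=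
  uglovU e ℓ (fun j => betaOf (Λ j) (t j))

/-- U(λ; t) = β⁻¹(U(β_t(λ))). -/
noncomputable def uglovPart (e ℓ : ℕ) (Λ : Fin ℓ → ℕ → ℕ) (t : Fin ℓ → ℤ) : ℕ → ℕ :=
  betaInv (uglovMulti e ℓ Λ t)

/-- core_e(λ; t) = β⁻¹(core_e(U(β_t(λ)))). -/
noncomputable def corePart (e ℓ : ℕ) (Λ : Fin ℓ → ℕ → ℕ) (t : Fin ℓ → ℤ) : ℕ → ℕ :=
  betaInv (coreSet e (uglovMulti e ℓ Λ t))

/-- wt_e(λ; t) = wt_e(U(β_t(λ))). -/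
noncomputable def wtPart (e ℓ : ℕ) (Λ : Fin ℓ → ℕ → ℕ) (t : Fin ℓ → ℤ) : ℕ :=
  wtSet e (uglovMulti e ℓ Λ t)

/-- t ∈ Ā_e^ℓ : t is weakly increasing with last entry at most first entry + e. -/
def memAbar (e : ℕ) {ℓ : ℕ} (t : Fin ℓ → ℤ) : Prop :=
  Monotone t ∧ ∀ i j : Fin ℓ, t j ≤ t i + (e : ℤ)

/-- t ∈ A_e^ℓ : t is weakly increasing with last entry at most first entry + e − 1. -/
def memA (e : ℕ) {ℓ : ℕ} (t : Fin ℓ → ℤ) : Prop :=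
  Monotone t ∧ ∀ i j : Fin ℓ, t j ≤ t i + (e : ℤ) - 1

/-- δ_i^t(λ) = Σ_j δ_i(β_{t_j}(λ^{(j)})). -/
noncomputable def deltaMulti (e ℓ : ℕ) (Λ : Fin ℓ → ℕ → ℕ) (t : Fin ℓ → ℤ) (i : ZMod e) : ℤ :=
  ∑ j : Fin ℓ, deltaOf e i (betaOf (Λ j) (t j))

/-- The Young diagram [λ] of an ℓ-partition, as a set of nodes (a, b, j). -/
def youngSet (ℓ : ℕ) (Λ : Fin ℓ → ℕ → ℕ) : Set (ℕ × ℕ × Fin ℓ) :=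
  {x | 1 ≤ x.1 ∧ 1 ≤ x.2.1 ∧ x.2.1 ≤ Λ x.2.2 (x.1 - 1)}

/-- The multiplicity of i ∈ ℤ/eℤ in the residue multiset res_e^t(λ). -/
noncomputable def resCount (e ℓ : ℕ) (Λ : Fin ℓ → ℕ → ℕ) (t : Fin ℓ → ℤ) (i : ZMod e) : ℕ :=
  {x : ℕ × ℕ × Fin ℓ | x ∈ youngSet ℓ Λ ∧
    (((x.2.1 : ℤ) - (x.1 : ℤ) + t x.2.2 : ℤ) : ZMod e) = i}.ncard

/-- The set of e-weights over the Ŵ_ℓ-orbit of (λ; t). -/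
noncomputable def orbitWeights (e ℓ : ℕ) (Λ : Fin ℓ → ℕ → ℕ) (t : Fin ℓ → ℤ) : Set ℕ :=
  {n : ℕ | ∃ σ : Equiv.Perm (Fin ℓ), ∃ v : Fin ℓ → ℤ,
    n = wtPart e ℓ (fun j => Λ (σ j)) (fun j => t (σ j) + (e : ℤ) * v j)}

lemma ncard_sub_ncard_diff (X Y : Set ℤ) (hX : X.Finite) (hY : Y.Finite) :
    ((X \ Y).ncard : ℤ) - ((Y \ X).ncard : ℤ) = (X.ncard : ℤ) - (Y.ncard : ℤ) := by
  have h1 := Set.ncard_diff_add_ncard X Y hX hY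
  have h2 := Set.ncard_diff_add_ncard Y X hY hX
  rw [Set.union_comm] at h2
  omega

lemma diff_finite (X Y : Set ℤ) (M m : ℤ) (hX : ∀ a ∈ X, a ≤ M) (hY : ∀ a, a ∉ Y → m ≤ a) :
    (X \ Y).Finite := by
  apply (Set.finite_Icc m M).subset
  rintro x ⟨hx, hy⟩
  exact ⟨hY x hy, hX x hx⟩

lemma diff_eq_inter_diff {X Y T : Set ℤ} (h : X \ Y ⊆ T) : X \ Y = (X ∩ T) \ (Y ∩ T) := by
  ext x
  constructor
  · rintro ⟨hx, hy⟩
    exact ⟨⟨hx, h ⟨hx, hy⟩⟩, fun hc => hy hc.1⟩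
  · rintro ⟨⟨hx, hT⟩, hc⟩
    exact ⟨hx, fun hy => hc ⟨hy, hT⟩⟩

lemma inter_nonneg_eq (C : Set ℤ) : C ∩ {x : ℤ | 0 ≤ x} = C \ {x : ℤ | x < 0} := by
  ext x; simp [not_lt]

lemma dd_eq (C D : Set ℤ)
    (h1 : (C \ D).Finite) (h2 : (D \ C).Finite)
    (h3 : (C \ {x : ℤ | x < 0}).Finite) (h4 : ({x : ℤ | x < 0} \ C).Finite)
    (h5 : (D \ {x : ℤ | x < 0}).Finite) (h6 : ({x : ℤ | x < 0} \ D).Finite) :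
    ((C \ D).ncard : ℤ) - ((D \ C).ncard : ℤ) = charge C - charge D := by
  set R : Set ℤ := {x | x < 0} with hR
  set T : Set ℤ := (C \ D) ∪ (D \ C) ∪ (C \ R) ∪ (D \ R) ∪ (R \ C) ∪ (R \ D) with hT
  have hTfin : T.Finite := ((((h1.union h2).union h3).union h5).union h4).union h6
  have sCD : C \ D ⊆ T := by intro x hx; simp only [hT, Set.mem_union]; tauto
  have sDC : D \ C ⊆ T := by intro x hx; simp only [hT, Set.mem_union]; tauto
  have sCR : C \ R ⊆ T := by intro x hx; simp only [hT, Set.mem_union]; tauto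
  have sDR : D \ R ⊆ T := by intro x hx; simp only [hT, Set.mem_union]; tauto
  have sRC : R \ C ⊆ T := by intro x hx; simp only [hT, Set.mem_union]; tauto
  have sRD : R \ D ⊆ T := by intro x hx; simp only [hT, Set.mem_union]; tauto
  have finC : (C ∩ T).Finite := hTfin.inter_of_right C
  have finD : (D ∩ T).Finite := hTfin.inter_of_right D
  have finR : (R ∩ T).Finite := hTfin.inter_of_right R
  have e1 : ((C \ D).ncard : ℤ) - ((D \ C).ncard : ℤ)
      = ((C ∩ T).ncard : ℤ) - ((D ∩ T).ncard : ℤ) := by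
    rw [diff_eq_inter_diff sCD, diff_eq_inter_diff sDC]
    exact ncard_sub_ncard_diff _ _ finC finD
  have e2 : charge C = ((C ∩ T).ncard : ℤ) - ((R ∩ T).ncard : ℤ) := by
    rw [charge, inter_nonneg_eq, ← hR, diff_eq_inter_diff sCR, diff_eq_inter_diff sRC]
    exact ncard_sub_ncard_diff _ _ finC finR
  have e3 : charge D = ((D ∩ T).ncard : ℤ) - ((R ∩ T).ncard : ℤ) := by
    rw [charge, inter_nonneg_eq, ← hR, diff_eq_inter_diff sDR, diff_eq_inter_diff sRD]
    exact ncard_sub_ncard_diff _ _ finD finR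
  omega

lemma qset_ub (B : Set ℤ) (hB : IsBetaSet B) (e : ℕ) (he : 0 < e) (c : ℤ) :
    ∃ M, ∀ a : ℤ, a * (e : ℤ) + c ∈ B → a ≤ M := by
  obtain ⟨⟨M, _, hM⟩, _⟩ := hB
  refine ⟨max 0 (M - c), fun a ha => ?_⟩
  have h1 : a * e + c ≤ M := hM _ ha
  have he' : (1:ℤ) ≤ e := by exact_mod_cast he
  rcases le_or_gt a 0 with h | h
  · exact le_trans h (le_max_left _ _)
  · have h2 : a ≤ a * e := by nlinarith
    have : a ≤ M - c := by linarith
    exact le_trans this (le_max_right _ _)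

lemma qset_lb (B : Set ℤ) (hB : IsBetaSet B) (e : ℕ) (he : 0 < e) (c : ℤ) :
    ∃ m, ∀ a : ℤ, a * (e : ℤ) + c ∉ B → m ≤ a := by
  obtain ⟨_, ⟨m, _, hm⟩⟩ := hB
  refine ⟨min 0 (m - c), fun a ha => ?_⟩
  have h1 : m ≤ a * e + c := hm _ ha
  have he' : (1:ℤ) ≤ e := by exact_mod_cast he
  rcases le_or_gt 0 a with h | h
  · exact le_trans (min_le_left _ _) h
  · have h2 : a * e ≤ a := by nlinarith
    have : m - c ≤ a := by linarith
    exact le_trans (min_le_right _ _) this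

lemma charge_shift (X : Set ℤ) (h3 : (X ∩ {x : ℤ | 0 ≤ x}).Finite)
    (h4 : ({x : ℤ | x < 0} \ X).Finite) :
    charge ((fun x => x + 1) '' X) = charge X + 1 := by
  have hinj : Function.Injective (fun x : ℤ => x + 1) := fun a b h => by simpa using h
  have hY1 : ((fun x => x + 1) '' X) ∩ {x : ℤ | 0 ≤ x}
      = (fun x => x + 1) '' (X ∩ {x : ℤ | -1 ≤ x}) := by
    ext x
    simp only [Set.mem_inter_iff, Set.mem_image, Set.mem_setOf_eq]
    constructor
    · rintro ⟨⟨a, ha, rfl⟩, hx⟩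
      exact ⟨a, ⟨ha, by omega⟩, rfl⟩
    · rintro ⟨a, ⟨ha, ha2⟩, rfl⟩
      exact ⟨⟨a, ha, rfl⟩, by omega⟩
  have hY2 : {x : ℤ | x < 0} \ ((fun x => x + 1) '' X)
      = (fun x => x + 1) '' ({x : ℤ | x < -1} \ X) := by
    ext x
    simp only [Set.mem_diff, Set.mem_image, Set.mem_setOf_eq]
    constructor
    · rintro ⟨hx, hn⟩
      exact ⟨x - 1, ⟨by omega, fun hc => hn ⟨x - 1, hc, by ring⟩⟩, by ring⟩
    · rintro ⟨a, ⟨ha, ha2⟩, rfl⟩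
      refine ⟨by omega, ?_⟩
      rintro ⟨b, hb, hb2⟩
      have : b = a := by omega
      exact ha2 (this ▸ hb)
  have hfinA : (X ∩ {x : ℤ | -1 ≤ x}).Finite := by
    rcases Classical.em ((-1 : ℤ) ∈ X) with hm | hm
    · have : X ∩ {x : ℤ | -1 ≤ x} = insert (-1) (X ∩ {x : ℤ | 0 ≤ x}) := by
        ext x
        simp only [Set.mem_inter_iff, Set.mem_setOf_eq, Set.mem_insert_iff]
        constructor
        · rintro ⟨hx, hx2⟩
          rcases eq_or_lt_of_le hx2 with h | h
          · left; omega
          · right; exact ⟨hx, by omega⟩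
        · rintro (rfl | ⟨hx, hx2⟩)
          · exact ⟨hm, le_refl _⟩
          · exact ⟨hx, by omega⟩
      rw [this]; exact h3.insert _
    · have : X ∩ {x : ℤ | -1 ≤ x} = X ∩ {x : ℤ | 0 ≤ x} := by
        ext x
        simp only [Set.mem_inter_iff, Set.mem_setOf_eq]
        constructor
        · rintro ⟨hx, hx2⟩
          refine ⟨hx, ?_⟩
          rcases eq_or_lt_of_le hx2 with h | h
          · exact absurd (h ▸ hx) (by simpa using hm)
          · omega
        · rintro ⟨hx, hx2⟩; exact ⟨hx, by omega⟩
      rw [this]; exact h3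
  have hfinB : ({x : ℤ | x < -1} \ X).Finite := by
    apply h4.subset
    rintro x ⟨h1x, h2x⟩
    simp only [Set.mem_setOf_eq] at h1x
    exact ⟨show x < 0 by omega, h2x⟩
  have main : charge ((fun x => x + 1) '' X)
      = ((X ∩ {x : ℤ | -1 ≤ x}).ncard : ℤ) - (({x : ℤ | x < -1} \ X).ncard : ℤ) := by
    rw [charge, hY1, hY2, Set.ncard_image_of_injective _ hinj,
      Set.ncard_image_of_injective _ hinj]
  rcases Classical.em ((-1 : ℤ) ∈ X) with hm | hm
  · have hA : X ∩ {x : ℤ | -1 ≤ x} = insert (-1) (X ∩ {x : ℤ | 0 ≤ x}) := by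
      ext x
      simp only [Set.mem_inter_iff, Set.mem_setOf_eq, Set.mem_insert_iff]
      constructor
      · rintro ⟨hx, hx2⟩
        rcases eq_or_lt_of_le hx2 with h | h
        · left; omega
        · right; exact ⟨hx, by omega⟩
      · rintro (rfl | ⟨hx, hx2⟩)
        · exact ⟨hm, le_refl _⟩
        · exact ⟨hx, by omega⟩
    have hB2 : {x : ℤ | x < -1} \ X = {x : ℤ | x < 0} \ X := by
      ext x
      simp only [Set.mem_diff, Set.mem_setOf_eq]
      constructor
      · rintro ⟨h1x, h2x⟩; exact ⟨by omega, h2x⟩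
      · rintro ⟨h1x, h2x⟩
        refine ⟨?_, h2x⟩
        rcases eq_or_lt_of_le (show x ≤ -1 by omega) with h | h
        · exact absurd (h ▸ hm) h2x
        · omega
    have hcard : (insert (-1:ℤ) (X ∩ {x : ℤ | 0 ≤ x})).ncard
        = (X ∩ {x : ℤ | 0 ≤ x}).ncard + 1 :=
      Set.ncard_insert_of_notMem (by simp) h3
    rw [main, hA, hB2, hcard, charge]
    push_cast
    ring
  · have hA : X ∩ {x : ℤ | -1 ≤ x} = X ∩ {x : ℤ | 0 ≤ x} := by
      ext x
      simp only [Set.mem_inter_iff, Set.mem_setOf_eq]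
      constructor
      · rintro ⟨hx, hx2⟩
        refine ⟨hx, ?_⟩
        rcases eq_or_lt_of_le hx2 with h | h
        · exact absurd (h ▸ hx) hm
        · omega
      · rintro ⟨hx, hx2⟩; exact ⟨hx, by omega⟩
    have hB2 : {x : ℤ | x < 0} \ X = insert (-1) ({x : ℤ | x < -1} \ X) := by
      ext x
      simp only [Set.mem_diff, Set.mem_setOf_eq, Set.mem_insert_iff]
      constructor
      · rintro ⟨h1x, h2x⟩
        rcases eq_or_lt_of_le (show x ≤ -1 by omega) with h | h
        · left; exact h
        · right; exact ⟨by omega, h2x⟩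
      · rintro (rfl | ⟨h1x, h2x⟩)
        · exact ⟨by omega, hm⟩
        · exact ⟨by omega, h2x⟩
    have hcard : (insert (-1:ℤ) ({x : ℤ | x < -1} \ X)).ncard
        = ({x : ℤ | x < -1} \ X).ncard + 1 :=
      Set.ncard_insert_of_notMem (by simp) hfinB
    rw [main, hA, charge, hB2, hcard]
    push_cast
    ring

lemma fin_nonneg_part (X : Set ℤ) (M : ℤ) (hM : ∀ a ∈ X, a ≤ M) :
    (X \ {x : ℤ | x < 0}).Finite :=
  diff_finite X _ M 0 hM (fun a ha => by simp only [Set.mem_setOf_eq, not_lt] at ha; exact ha)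

lemma fin_neg_compl (X : Set ℤ) (m : ℤ) (hm : ∀ a, a ∉ X → m ≤ a) :
    ({x : ℤ | x < 0} \ X).Finite :=
  diff_finite _ X (-1) m (fun a ha => by simp only [Set.mem_setOf_eq] at ha; omega) hm

/-- δ_i(B) = s(B_i) − s(B_{i−1}) − [i = 0], indices mod e. -/
theorem stmt2 (e : ℕ) (he : 2 ≤ e) (B : Set ℤ) (hB : IsBetaSet B) (i : ℕ) (hi : i < e) :
    deltaOf e (i : ZMod e) B =
      charge (quotComp e B i) - charge (quotComp e B (if i = 0 then e - 1 else i - 1))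
        - (if i = 0 then 1 else 0) := by
  have hepos : 0 < e := by omega
  have heZ : ((e : ℤ)) ≠ 0 := by exact_mod_cast (by omega : e ≠ 0)
  have hdvd : ∀ x : ℤ, ((x : ZMod e) = ((i : ℕ) : ZMod e)) ↔ ∃ a : ℤ, x = a * (e : ℤ) + (i : ℤ) := by
    intro x
    rw [show ((i : ℕ) : ZMod e) = ((i : ℤ) : ZMod e) from by push_cast; rfl,
      ZMod.intCast_eq_intCast_iff, Int.modEq_iff_dvd]
    constructor
    · rintro ⟨k, hk⟩
      exact ⟨-k, by linear_combination -hk⟩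
    · rintro ⟨a, rfl⟩
      exact ⟨-a, by ring⟩
  have hdvd2 : ∀ x : ℤ, ((x : ZMod e) = ((i : ℕ) : ZMod e) - 1)
      ↔ ∃ a : ℤ, x = a * (e : ℤ) + (i : ℤ) - 1 := by
    intro x
    rw [eq_sub_iff_add_eq, show ((x : ZMod e) + 1) = (((x + 1 : ℤ)) : ZMod e) from by
      push_cast; ring, hdvd (x + 1)]
    constructor
    · rintro ⟨a, ha⟩
      exact ⟨a, by linear_combination ha⟩
    · rintro ⟨a, rfl⟩
      exact ⟨a, by ring⟩
  set C : Set ℤ := {a : ℤ | a * (e : ℤ) + (i : ℤ) ∈ B} with hCdef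
  set D : Set ℤ := {a : ℤ | a * (e : ℤ) + ((i : ℤ) - 1) ∈ B} with hDdef
  have hCm : ∀ a : ℤ, a ∈ C ↔ a * (e : ℤ) + (i : ℤ) ∈ B := fun a => Iff.rfl
  have hDm : ∀ a : ℤ, a ∈ D ↔ a * (e : ℤ) + ((i : ℤ) - 1) ∈ B := fun a => Iff.rfl
  have hA1 : {x : ℤ | x ∈ B ∧ (x : ZMod e) = ((i : ℕ) : ZMod e) ∧ x - 1 ∉ B}
      = (fun a : ℤ => a * (e : ℤ) + (i : ℤ)) '' (C \ D) := by
    ext x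
    simp only [Set.mem_setOf_eq, Set.mem_image, Set.mem_diff]
    constructor
    · rintro ⟨hxB, hxi, hx1⟩
      obtain ⟨a, rfl⟩ := (hdvd x).mp hxi
      refine ⟨a, ⟨(hCm a).mpr hxB, ?_⟩, rfl⟩
      intro hD
      apply hx1
      have h : a * (e : ℤ) + ((i : ℤ) - 1) = a * (e : ℤ) + (i : ℤ) - 1 := by ring
      rw [← h]
      exact (hDm a).mp hD
    · rintro ⟨a, ⟨hC, hD⟩, rfl⟩
      refine ⟨(hCm a).mp hC, (hdvd _).mpr ⟨a, rfl⟩, ?_⟩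
      intro hB1
      apply hD
      apply (hDm a).mpr
      have h : a * (e : ℤ) + ((i : ℤ) - 1) = a * (e : ℤ) + (i : ℤ) - 1 := by ring
      rw [h]
      exact hB1
  have hA2 : {x : ℤ | x ∈ B ∧ (x : ZMod e) = ((i : ℕ) : ZMod e) - 1 ∧ x + 1 ∉ B}
      = (fun a : ℤ => a * (e : ℤ) + (i : ℤ) - 1) '' (D \ C) := by
    ext x
    simp only [Set.mem_setOf_eq, Set.mem_image, Set.mem_diff]
    constructor
    · rintro ⟨hxB, hxi, hx1⟩
      obtain ⟨a, rfl⟩ := (hdvd2 x).mp hxi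
      refine ⟨a, ⟨?_, ?_⟩, rfl⟩
      · apply (hDm a).mpr
        have h : a * (e : ℤ) + ((i : ℤ) - 1) = a * (e : ℤ) + (i : ℤ) - 1 := by ring
        rw [h]; exact hxB
      · intro hC
        apply hx1
        have h : a * (e : ℤ) + (i : ℤ) - 1 + 1 = a * (e : ℤ) + (i : ℤ) := by ring
        rw [h]
        exact (hCm a).mp hC
    · rintro ⟨a, ⟨hD, hC⟩, rfl⟩
      refine ⟨?_, (hdvd2 _).mpr ⟨a, rfl⟩, ?_⟩
      · have h : a * (e : ℤ) + ((i : ℤ) - 1) = a * (e : ℤ) + (i : ℤ) - 1 := by ring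
        rw [← h]
        exact (hDm a).mp hD
      · intro hB1
        apply hC
        apply (hCm a).mpr
        have h : a * (e : ℤ) + (i : ℤ) - 1 + 1 = a * (e : ℤ) + (i : ℤ) := by ring
        rw [← h]
        exact hB1
  have hinj1 : Function.Injective (fun a : ℤ => a * (e : ℤ) + (i : ℤ)) := by
    intro a b h
    simp only at h
    exact mul_right_cancel₀ heZ (by linarith)
  have hinj2 : Function.Injective (fun a : ℤ => a * (e : ℤ) + (i : ℤ) - 1) := by
    intro a b h
    simp only at h
    exact mul_right_cancel₀ heZ (by linarith)
  obtain ⟨MC, hMC⟩ := qset_ub B hB e hepos (i : ℤ)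
  obtain ⟨mC, hmC⟩ := qset_lb B hB e hepos (i : ℤ)
  obtain ⟨MD, hMD⟩ := qset_ub B hB e hepos ((i : ℤ) - 1)
  obtain ⟨mD, hmD⟩ := qset_lb B hB e hepos ((i : ℤ) - 1)
  have f1 : (C \ D).Finite := diff_finite C D MC mD (fun a ha => hMC a ha) (fun a ha => hmD a ha)
  have f2 : (D \ C).Finite := diff_finite D C MD mC (fun a ha => hMD a ha) (fun a ha => hmC a ha)
  have f3 : (C \ {x : ℤ | x < 0}).Finite := fin_nonneg_part C MC (fun a ha => hMC a ha)
  have f4 : ({x : ℤ | x < 0} \ C).Finite := fin_neg_compl C mC (fun a ha => hmC a ha)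
  have f5 : (D \ {x : ℤ | x < 0}).Finite := fin_nonneg_part D MD (fun a ha => hMD a ha)
  have f6 : ({x : ℤ | x < 0} \ D).Finite := fin_neg_compl D mD (fun a ha => hmD a ha)
  have hmain : deltaOf e (i : ZMod e) B = charge C - charge D := by
    have : deltaOf e (i : ZMod e) B
        = ({x : ℤ | x ∈ B ∧ (x : ZMod e) = ((i : ℕ) : ZMod e) ∧ x - 1 ∉ B}.ncard : ℤ)
          - ({x : ℤ | x ∈ B ∧ (x : ZMod e) = ((i : ℕ) : ZMod e) - 1 ∧ x + 1 ∉ B}.ncard : ℤ) := rfl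
    rw [this, hA1, hA2, Set.ncard_image_of_injective _ hinj1, Set.ncard_image_of_injective _ hinj2]
    exact dd_eq C D f1 f2 f3 f4 f5 f6
  have hqC : quotComp e B i = C := rfl
  rw [hmain, hqC]
  by_cases hi0 : i = 0
  · subst hi0
    simp only [if_pos rfl]
    have hcast : ((e - 1 : ℕ) : ℤ) = (e : ℤ) - 1 := by omega
    have hDimg : D = (fun x => x + 1) '' quotComp e B (e - 1) := by
      ext x
      simp only [hDdef, quotComp, Set.mem_setOf_eq, Set.mem_image, hcast]
      constructor
      · intro hx
        refine ⟨x - 1, ?_, by ring⟩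
        have h : (x - 1) * (e : ℤ) + ((e : ℤ) - 1) = x * (e : ℤ) + (((0 : ℕ) : ℤ) - 1) := by
          push_cast; ring
        rw [h]; exact hx
      · rintro ⟨a, ha, rfl⟩
        have h : (a + 1) * (e : ℤ) + (((0 : ℕ) : ℤ) - 1) = a * (e : ℤ) + ((e : ℤ) - 1) := by
          push_cast; ring
        rw [h]; exact ha
    obtain ⟨ME, hME⟩ := qset_ub B hB e hepos ((e - 1 : ℕ) : ℤ)
    obtain ⟨mE, hmE⟩ := qset_lb B hB e hepos ((e - 1 : ℕ) : ℤ)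
    have g3 : (quotComp e B (e - 1) ∩ {x : ℤ | 0 ≤ x}).Finite := by
      rw [inter_nonneg_eq]
      exact fin_nonneg_part _ ME (fun a ha => hME a ha)
    have g4 : ({x : ℤ | x < 0} \ quotComp e B (e - 1)).Finite :=
      fin_neg_compl _ mE (fun a ha => hmE a ha)
    rw [hDimg, charge_shift _ g3 g4]
    simp only [if_true]
    ring
  · simp only [if_neg hi0]
    have hcast : ((i - 1 : ℕ) : ℤ) = (i : ℤ) - 1 := by omega
    have hDq : D = quotComp e B (i - 1) := by
      simp only [hDdef, quotComp, hcast]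
    rw [hDq]
    ring
end

section
/- For any β-set B and every i ∈ ℤ/eℤ, δ_i(B) = δ_i(core_e(B)); that is, the e-hub (δ_0(B), …, δ_{e−1}(B)) of B equals the e-hub of its e-core. -/
open Classical in
lemma charge_eq (Z : Set ℤ) (N : ℕ) (h1 : ∀ x : ℤ, (N:ℤ) ≤ x → x ∉ Z)
    (h2 : ∀ x : ℤ, x < -(N:ℤ) → x ∈ Z) :
    charge Z = ((((Finset.Ico (-(N:ℤ)) (N:ℤ)).filter (· ∈ Z)).card : ℤ)) - N := by
  classical
  unfold charge
  have e1 : Z ∩ {x : ℤ | 0 ≤ x} = ↑((Finset.Ico (0:ℤ) (N:ℤ)).filter (· ∈ Z)) := by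
    ext x
    simp only [Set.mem_inter_iff, Set.mem_setOf_eq, Finset.coe_filter, Finset.mem_Ico]
    constructor
    · rintro ⟨hx, hx0⟩
      refine ⟨⟨hx0, ?_⟩, hx⟩
      by_contra h; push_neg at h; exact h1 x h hx
    · rintro ⟨⟨h0, _⟩, hx⟩; exact ⟨hx, h0⟩
  have e2 : {x : ℤ | x < 0} \ Z = ↑((Finset.Ico (-(N:ℤ)) (0:ℤ)).filter (· ∉ Z)) := by
    ext x
    simp only [Set.mem_diff, Set.mem_setOf_eq, Finset.coe_filter, Finset.mem_Ico]
    constructor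
    · rintro ⟨hx0, hx⟩
      refine ⟨⟨?_, hx0⟩, hx⟩
      by_contra h; push_neg at h; exact hx (h2 x h)
    · rintro ⟨⟨_, h0⟩, hx⟩; exact ⟨h0, hx⟩
  rw [e1, e2, Set.ncard_coe_finset, Set.ncard_coe_finset]
  have hsplit : Finset.Ico (-(N:ℤ)) (N:ℤ) = Finset.Ico (-(N:ℤ)) 0 ∪ Finset.Ico (0:ℤ) (N:ℤ) := by
    rw [Finset.Ico_union_Ico_eq_Ico] <;> simp
  have hdisj : Disjoint (Finset.Ico (-(N:ℤ)) 0) (Finset.Ico (0:ℤ) (N:ℤ)) := by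
    simp [Finset.disjoint_left, Finset.mem_Ico]; omega
  have hc : ((Finset.Ico (-(N:ℤ)) (N:ℤ)).filter (· ∈ Z)).card
      = ((Finset.Ico (-(N:ℤ)) (0:ℤ)).filter (· ∈ Z)).card
        + ((Finset.Ico (0:ℤ) (N:ℤ)).filter (· ∈ Z)).card := by
    rw [hsplit, Finset.filter_union, Finset.card_union_of_disjoint
      (Finset.disjoint_filter_filter hdisj)]
  have hcomp : ((Finset.Ico (-(N:ℤ)) (0:ℤ)).filter (· ∈ Z)).card
      + ((Finset.Ico (-(N:ℤ)) (0:ℤ)).filter (· ∉ Z)).card = N := by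
    rw [Finset.card_filter_add_card_filter_not]
    simp [Int.card_Ico]
  omega

def Bdd (X : Set ℤ) : Prop := (∃ M : ℤ, ∀ x ∈ X, x ≤ M) ∧ (∃ m : ℤ, ∀ x : ℤ, x < m → x ∈ X)

lemma bdd_N (X : Set ℤ) (h : Bdd X) :
    ∃ N : ℕ, (∀ x : ℤ, (N:ℤ) ≤ x → x ∉ X) ∧ (∀ x : ℤ, x < -(N:ℤ) → x ∈ X) := by
  obtain ⟨⟨M, hM⟩, ⟨m, hm⟩⟩ := h
  refine ⟨(max (M + 1) (-m)).toNat, fun x hx hxX => ?_, fun x hx => ?_⟩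
  · have h1 : M + 1 ≤ ((max (M + 1) (-m)).toNat : ℤ) :=
      le_trans (le_max_left _ _) (Int.self_le_toNat _)
    exact absurd (hM x hxX) (by omega)
  · have h1 : -m ≤ ((max (M + 1) (-m)).toNat : ℤ) :=
      le_trans (le_max_right _ _) (Int.self_le_toNat _)
    exact hm x (by omega)

lemma bdd_N_mono (X : Set ℤ) (N N' : ℕ) (h : N ≤ N')
    (hN : (∀ x : ℤ, (N:ℤ) ≤ x → x ∉ X) ∧ (∀ x : ℤ, x < -(N:ℤ) → x ∈ X)) :
    (∀ x : ℤ, (N':ℤ) ≤ x → x ∉ X) ∧ (∀ x : ℤ, x < -(N':ℤ) → x ∈ X) := by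
  refine ⟨fun x hx => hN.1 x (by exact_mod_cast le_trans (by exact_mod_cast h) hx),
    fun x hx => hN.2 x (by push_cast at hx ⊢; omega)⟩

open Classical in
lemma keyA (X Y : Set ℤ) (hX : Bdd X) (hY : Bdd Y) :
    ({a : ℤ | a ∈ X ∧ a ∉ Y}.ncard : ℤ) - ({a : ℤ | a ∈ Y ∧ a ∉ X}.ncard : ℤ)
      = charge X - charge Y := by
  classical
  obtain ⟨N₁, hN₁⟩ := bdd_N X hX
  obtain ⟨N₂, hN₂⟩ := bdd_N Y hY
  set N := max N₁ N₂ with hN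
  obtain ⟨hXa, hXb⟩ := bdd_N_mono X N₁ N (le_max_left _ _) hN₁
  obtain ⟨hYa, hYb⟩ := bdd_N_mono Y N₂ N (le_max_right _ _) hN₂
  have e1 : {a : ℤ | a ∈ X ∧ a ∉ Y}
      = ↑((Finset.Ico (-(N:ℤ)) (N:ℤ)).filter (fun a => a ∈ X ∧ a ∉ Y)) := by
    ext x
    simp only [Set.mem_setOf_eq, Finset.coe_filter, Finset.mem_Ico]
    constructor
    · rintro ⟨hx, hy⟩
      refine ⟨⟨?_, ?_⟩, hx, hy⟩
      · by_contra h; push_neg at h; exact hy (hYb x h)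
      · by_contra h; push_neg at h; exact hXa x h hx
    · tauto
  have e2 : {a : ℤ | a ∈ Y ∧ a ∉ X}
      = ↑((Finset.Ico (-(N:ℤ)) (N:ℤ)).filter (fun a => a ∈ Y ∧ a ∉ X)) := by
    ext x
    simp only [Set.mem_setOf_eq, Finset.coe_filter, Finset.mem_Ico]
    constructor
    · rintro ⟨hx, hy⟩
      refine ⟨⟨?_, ?_⟩, hx, hy⟩
      · by_contra h; push_neg at h; exact hy (hXb x h)
      · by_contra h; push_neg at h; exact hYa x h hx
    · tauto
  rw [e1, e2, Set.ncard_coe_finset, Set.ncard_coe_finset,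
    charge_eq X N hXa hXb, charge_eq Y N hYa hYb]
  set s := Finset.Ico (-(N:ℤ)) (N:ℤ)
  have hX' : (s.filter (fun a => a ∈ X ∧ a ∈ Y)).card + (s.filter (fun a => a ∈ X ∧ a ∉ Y)).card
      = (s.filter (· ∈ X)).card := by
    rw [← Finset.filter_filter, ← Finset.filter_filter,
      Finset.card_filter_add_card_filter_not]
  have hY' : (s.filter (fun a => a ∈ Y ∧ a ∈ X)).card + (s.filter (fun a => a ∈ Y ∧ a ∉ X)).card
      = (s.filter (· ∈ Y)).card := by
    rw [← Finset.filter_filter, ← Finset.filter_filter,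
      Finset.card_filter_add_card_filter_not]
  have hcomm : (s.filter (fun a => a ∈ X ∧ a ∈ Y)) = (s.filter (fun a => a ∈ Y ∧ a ∈ X)) := by
    apply Finset.filter_congr; intros; tauto
  rw [hcomm] at hX'
  omega

open Classical in
lemma charge_shift_s3 (Z : Set ℤ) (h : Bdd Z) :
    charge {a : ℤ | a - 1 ∈ Z} = charge Z + 1 := by
  obtain ⟨N, hN1, hN2⟩ := bdd_N Z h
  have hs1 : ∀ x : ℤ, ((N + 1 : ℕ):ℤ) ≤ x → x ∉ {a : ℤ | a - 1 ∈ Z} := by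
    intro x hx hmem; exact hN1 (x - 1) (by push_cast at hx; omega) hmem
  have hs2 : ∀ x : ℤ, x < -((N + 1 : ℕ):ℤ) → x ∈ {a : ℤ | a - 1 ∈ Z} := by
    intro x hx; exact hN2 (x - 1) (by push_cast at hx; omega)
  rw [charge_eq _ (N + 1) hs1 hs2, charge_eq Z N hN1 hN2]
  have hb1 : -(((N+1:ℕ)):ℤ) = -(N:ℤ) - 1 := by push_cast; ring
  have hb2 : (((N+1:ℕ)):ℤ) = (N:ℤ) + 1 := by push_cast; ring
  rw [hb1, hb2]
  have himg : Finset.Ico (-(N:ℤ) - 1) ((N:ℤ) + 1)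
      = (Finset.Ico (-(N:ℤ) - 2) ((N:ℤ))).image (· + 1) := by
    rw [Finset.image_add_right_Ico]; congr 1 <;> ring
  have hinj : Function.Injective (fun a : ℤ => a + 1) := add_left_injective 1
  have hcard : ((Finset.Ico (-(N:ℤ) - 1) ((N:ℤ) + 1)).filter (· ∈ {a : ℤ | a - 1 ∈ Z})).card
      = ((Finset.Ico (-(N:ℤ) - 2) ((N:ℤ))).filter (· ∈ Z)).card := by
    rw [himg, Finset.filter_image, Finset.card_image_of_injective _ hinj]
    congr 1
    apply Finset.filter_congr
    intro x _
    simp [Set.mem_setOf_eq]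
  rw [hcard]
  have hsplit : Finset.Ico (-(N:ℤ) - 2) ((N:ℤ))
      = Finset.Ico (-(N:ℤ) - 2) (-(N:ℤ)) ∪ Finset.Ico (-(N:ℤ)) ((N:ℤ)) := by
    rw [Finset.Ico_union_Ico_eq_Ico] <;> omega
  have hdisj : Disjoint (Finset.Ico (-(N:ℤ) - 2) (-(N:ℤ))) (Finset.Ico (-(N:ℤ)) ((N:ℤ))) := by
    simp [Finset.disjoint_left, Finset.mem_Ico]; omega
  have hfull : (Finset.Ico (-(N:ℤ) - 2) (-(N:ℤ))).filter (· ∈ Z)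
      = Finset.Ico (-(N:ℤ) - 2) (-(N:ℤ)) := by
    apply Finset.filter_true_of_mem
    intro x hx
    rw [Finset.mem_Ico] at hx
    exact hN2 x hx.2
  rw [hsplit, Finset.filter_union,
    Finset.card_union_of_disjoint (Finset.disjoint_filter_filter hdisj), hfull]
  have h2 : (Finset.Ico (-(N:ℤ) - 2) (-(N:ℤ))).card = 2 := by
    rw [Int.card_Ico]; omega
  rw [h2]
  push_cast
  ring

open Classical in
lemma charge_lt (c : ℤ) : charge {a : ℤ | a < c} = c := by
  unfold charge
  rcases le_or_gt 0 c with hc | hc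
  · have e1 : {a : ℤ | a < c} ∩ {x : ℤ | 0 ≤ x} = ↑(Finset.Ico (0:ℤ) c) := by
      ext x; simp only [Set.mem_inter_iff, Set.mem_setOf_eq, Finset.coe_Ico, Set.mem_Ico]
      tauto
    have e2 : {x : ℤ | x < 0} \ {a : ℤ | a < c} = ∅ := by
      ext x; simp only [Set.mem_diff, Set.mem_setOf_eq, Set.mem_empty_iff_false, iff_false]
      omega
    rw [e1, e2, Set.ncard_coe_finset, Int.card_Ico, Set.ncard_empty]
    omega
  · have e1 : {a : ℤ | a < c} ∩ {x : ℤ | 0 ≤ x} = ∅ := by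
      ext x; simp only [Set.mem_inter_iff, Set.mem_setOf_eq, Set.mem_empty_iff_false, iff_false]
      omega
    have e2 : {x : ℤ | x < 0} \ {a : ℤ | a < c} = ↑(Finset.Ico c 0) := by
      ext x; simp only [Set.mem_diff, Set.mem_setOf_eq, Finset.coe_Ico, Set.mem_Ico]
      omega
    rw [e1, e2, Set.ncard_coe_finset, Int.card_Ico, Set.ncard_empty]
    omega

lemma resid (e : ℕ) (he : 0 < e) (i : ZMod e) (x : ℤ) :
    ((x : ZMod e) = i) ↔ ∃ a : ℤ, x = a * (e:ℤ) + (i.val : ℤ) := by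
  haveI : NeZero e := ⟨he.ne'⟩
  constructor
  · intro h
    have hv : (((i.val : ℤ)) : ZMod e) = i := by
      push_cast
      simp [ZMod.natCast_val, ZMod.cast_id]
    have h0 : (((x - (i.val : ℤ)) : ℤ) : ZMod e) = 0 := by
      push_cast
      rw [h]
      simp [ZMod.natCast_val, ZMod.cast_id]
    have hdvd : (e:ℤ) ∣ x - (i.val : ℤ) := (ZMod.intCast_zmod_eq_zero_iff_dvd _ e).1 h0
    obtain ⟨a, ha⟩ := hdvd
    exact ⟨a, by rw [mul_comm a (e:ℤ)]; omega⟩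
  · rintro ⟨a, rfl⟩
    push_cast
    simp [ZMod.natCast_val, ZMod.cast_id]

lemma unique_div (e : ℕ) (he : 0 < e) (a a' r r' : ℤ) (hr : 0 ≤ r) (hr2 : r < e)
    (hr' : 0 ≤ r') (hr'2 : r' < e) (h : a * e + r = a' * e + r') : a = a' ∧ r = r' := by
  have hd : (e:ℤ) ∣ r' - r := ⟨a - a', by ring_nf; linarith⟩
  have h0 : r' - r = 0 := Int.eq_zero_of_abs_lt_dvd hd (by rw [abs_lt]; omega)
  have : a * (e:ℤ) = a' * e := by omega
  have he' : (e:ℤ) ≠ 0 := by exact_mod_cast he.ne'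
  exact ⟨mul_right_cancel₀ he' this, by omega⟩

lemma bdd_quot (e : ℕ) (he : 0 < e) (B : Set ℤ) (hB : Bdd B) (t : ℤ) :
    Bdd {a : ℤ | a * (e:ℤ) + t ∈ B} := by
  obtain ⟨⟨M, hM⟩, ⟨m, hm⟩⟩ := hB
  constructor
  · refine ⟨max (M - t) 0, fun a ha => ?_⟩
    by_contra h; push_neg at h
    have h0 : 0 < a := lt_of_le_of_lt (le_max_right _ _) h
    have h1 : M - t < a := lt_of_le_of_lt (le_max_left _ _) h
    have h2 : a * 1 ≤ a * (e:ℤ) := by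
      apply mul_le_mul_of_nonneg_left _ h0.le
      exact_mod_cast he
    have h3 := hM _ ha
    linarith
  · refine ⟨min (m - t) 0, fun a ha => ?_⟩
    have h0 : a < 0 := lt_of_lt_of_le ha (min_le_right _ _)
    have h1 : a < m - t := lt_of_lt_of_le ha (min_le_left _ _)
    have h2 : a * (e:ℤ) ≤ a * 1 := by
      apply mul_le_mul_of_nonpos_left _ h0.le
      exact_mod_cast he
    apply hm
    linarith

lemma delta_eq (e : ℕ) (he : 0 < e) (B : Set ℤ) (i : ZMod e)
    (hX : Bdd (quotComp e B i.val))
    (hY : Bdd {a : ℤ | a * (e:ℤ) + (i.val:ℤ) - 1 ∈ B}) :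
    deltaOf e i B
      = charge (quotComp e B i.val) - charge {a : ℤ | a * (e:ℤ) + (i.val:ℤ) - 1 ∈ B} := by
  have he' : (e:ℤ) ≠ 0 := by exact_mod_cast he.ne'
  have hinj1 : Function.Injective (fun a : ℤ => a * (e:ℤ) + (i.val:ℤ)) := by
    intro a b h
    simp only at h
    exact mul_right_cancel₀ he' (by omega)
  have hinj2 : Function.Injective (fun a : ℤ => a * (e:ℤ) + (i.val:ℤ) - 1) := by
    intro a b h
    simp only at h
    exact mul_right_cancel₀ he' (by omega)
  have e1 : {x : ℤ | x ∈ B ∧ (x : ZMod e) = i ∧ x - 1 ∉ B}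
      = (fun a : ℤ => a * (e:ℤ) + (i.val:ℤ)) ''
        {a : ℤ | a ∈ quotComp e B i.val ∧ a ∉ {a : ℤ | a * (e:ℤ) + (i.val:ℤ) - 1 ∈ B}} := by
    ext x
    simp only [Set.mem_setOf_eq, Set.mem_image, quotComp]
    constructor
    · rintro ⟨hxB, hxi, hx1⟩
      obtain ⟨a, rfl⟩ := (resid e he i x).1 hxi
      exact ⟨a, ⟨hxB, hx1⟩, rfl⟩
    · rintro ⟨a, ⟨haB, ha1⟩, rfl⟩
      exact ⟨haB, (resid e he i _).2 ⟨a, rfl⟩, ha1⟩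
  have e2 : {x : ℤ | x ∈ B ∧ (x : ZMod e) = i - 1 ∧ x + 1 ∉ B}
      = (fun a : ℤ => a * (e:ℤ) + (i.val:ℤ) - 1) ''
        {a : ℤ | a ∈ {a : ℤ | a * (e:ℤ) + (i.val:ℤ) - 1 ∈ B} ∧ a ∉ quotComp e B i.val} := by
    ext x
    simp only [Set.mem_setOf_eq, Set.mem_image, quotComp]
    constructor
    · rintro ⟨hxB, hxi, hx1⟩
      have hxi' : ((x + 1 : ℤ) : ZMod e) = i := by
        push_cast
        rw [hxi]
        ring
      obtain ⟨a, ha⟩ := (resid e he i (x + 1)).1 hxi'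
      refine ⟨a, ⟨?_, ?_⟩, by omega⟩
      · rw [show a * (e:ℤ) + (i.val:ℤ) - 1 = x by omega]; exact hxB
      · rw [show a * (e:ℤ) + (i.val:ℤ) = x + 1 by omega]; exact hx1
    · rintro ⟨a, ⟨haB, ha1⟩, rfl⟩
      refine ⟨haB, ?_, by simpa using ha1⟩
      have h1 : ((a * (e:ℤ) + (i.val:ℤ) : ℤ) : ZMod e) = i := (resid e he i _).2 ⟨a, rfl⟩
      have : ((a * (e:ℤ) + (i.val:ℤ) - 1 : ℤ) : ZMod e) + 1 = i := by
        rw [show ((a * (e:ℤ) + (i.val:ℤ) - 1 : ℤ) : ZMod e) + 1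
            = ((a * (e:ℤ) + (i.val:ℤ) : ℤ) : ZMod e) from by push_cast; ring]
        exact h1
      exact eq_sub_of_add_eq this
  unfold deltaOf
  rw [e1, e2, Set.ncard_image_of_injective _ hinj1, Set.ncard_image_of_injective _ hinj2]
  exact keyA _ _ hX hY

lemma bdd_lt (c : ℤ) : Bdd {a : ℤ | a < c} :=
  ⟨⟨c, fun x hx => le_of_lt hx⟩, ⟨c, fun x hx => hx⟩⟩

lemma quot_core (e : ℕ) (he : 0 < e) (B : Set ℤ) (r : ℕ) (hr : r < e) :
    quotComp e (coreSet e B) r = {a : ℤ | a < charge (quotComp e B r)} := by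
  ext a
  simp only [quotComp, coreSet, Set.mem_setOf_eq]
  constructor
  · rintro ⟨i', hi', a', ha', heq⟩
    obtain ⟨h1, h2⟩ := unique_div e he a a' (r:ℤ) (i':ℤ) (Int.natCast_nonneg r)
      (by exact_mod_cast hr) (Int.natCast_nonneg i') (by exact_mod_cast hi') heq
    have hri : r = i' := by exact_mod_cast h2
    subst hri
    rwa [h1]
  · intro h
    exact ⟨r, hr, a, h, rfl⟩

/-- δ_i(B) = δ_i(core_e(B)) for every i ∈ ℤ/eℤ; i.e. the e-hub of B equals
the e-hub of its e-core. -/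
theorem stmt3 (e : ℕ) (he : 2 ≤ e) (B : Set ℤ) (hB : IsBetaSet B) (i : ZMod e) :
    deltaOf e i B = deltaOf e i (coreSet e B) := by
  have he0 : 0 < e := by omega
  haveI : NeZero e := ⟨by omega⟩
  have hv : i.val < e := ZMod.val_lt i
  have hBdd : Bdd B := by
    obtain ⟨⟨M, _, hMax⟩, ⟨m, _, hmin⟩⟩ := hB
    refine ⟨⟨M, hMax⟩, ⟨m, fun x hx => ?_⟩⟩
    by_contra h
    exact absurd (hmin x h) (by omega)
  set C := coreSet e B with hC
  -- X sides
  have hXC : quotComp e C i.val = {a : ℤ | a < charge (quotComp e B i.val)} :=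
    quot_core e he0 B i.val hv
  have hXCc : charge (quotComp e C i.val) = charge (quotComp e B i.val) := by
    rw [hXC, charge_lt]
  have hBX : Bdd (quotComp e B i.val) := bdd_quot e he0 B hBdd (i.val : ℤ)
  have hCX : Bdd (quotComp e C i.val) := by rw [hXC]; exact bdd_lt _
  -- Y sides
  have hYB : Bdd {a : ℤ | a * (e:ℤ) + (i.val:ℤ) - 1 ∈ B} := by
    have hs : {a : ℤ | a * (e:ℤ) + (i.val:ℤ) - 1 ∈ B}
        = {a : ℤ | a * (e:ℤ) + ((i.val:ℤ) - 1) ∈ B} := by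
      ext a; simp only [Set.mem_setOf_eq, add_sub_assoc]
    rw [hs]
    exact bdd_quot e he0 B hBdd _
  -- charge of Y for a general set with known quotient description:
  have key : ∀ D : Set ℤ, Bdd (quotComp e D (e-1)) →
      (∀ r : ℕ, r < e → charge (quotComp e D r) = charge (quotComp e B r)) →
      charge {a : ℤ | a * (e:ℤ) + (i.val:ℤ) - 1 ∈ D}
        = (if i.val = 0 then charge (quotComp e B (e-1)) + 1
           else charge (quotComp e B (i.val - 1))) := by
    intro D hD hq
    by_cases h0 : i.val = 0
    · rw [if_pos h0]
      have hs : {a : ℤ | a * (e:ℤ) + (i.val:ℤ) - 1 ∈ D}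
          = {a : ℤ | a - 1 ∈ quotComp e D (e-1)} := by
        ext a
        simp only [Set.mem_setOf_eq, quotComp, h0]
        rw [show (a - 1) * (e:ℤ) + ((e-1 : ℕ):ℤ) = a * (e:ℤ) + ((0:ℕ):ℤ) - 1 by
          push_cast [Nat.cast_sub (by omega : 1 ≤ e)]; ring]
      rw [hs, charge_shift_s3 (quotComp e D (e-1)) hD, hq (e-1) (by omega)]
    · rw [if_neg h0]
      have hs : {a : ℤ | a * (e:ℤ) + (i.val:ℤ) - 1 ∈ D} = quotComp e D (i.val - 1) := by
        ext a
        simp only [Set.mem_setOf_eq, quotComp]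
        rw [show a * (e:ℤ) + ((i.val - 1 : ℕ):ℤ) = a * (e:ℤ) + (i.val:ℤ) - 1 by
          push_cast [Nat.cast_sub (by omega : 1 ≤ i.val)]; ring]
      rw [hs, hq (i.val - 1) (by omega)]
  -- Bdd C components for delta_eq: need Bdd Y_C
  have hCq : ∀ r : ℕ, r < e → charge (quotComp e C r) = charge (quotComp e B r) := by
    intro r hr
    rw [quot_core e he0 B r hr, charge_lt]
  have hYC : Bdd {a : ℤ | a * (e:ℤ) + (i.val:ℤ) - 1 ∈ C} := by
    by_cases h0 : i.val = 0
    · have hs : {a : ℤ | a * (e:ℤ) + (i.val:ℤ) - 1 ∈ C}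
          = {a : ℤ | a < charge (quotComp e B (e-1)) + 1} := by
        ext a
        simp only [Set.mem_setOf_eq, h0]
        rw [show a * (e:ℤ) + ((0:ℕ):ℤ) - 1 = (a - 1) * (e:ℤ) + ((e-1 : ℕ):ℤ) from by
          push_cast [Nat.cast_sub (by omega : 1 ≤ e)]; ring]
        have hqc : ((a-1) ∈ quotComp e C (e-1)) ↔ (a - 1 < charge (quotComp e B (e-1))) := by
          rw [quot_core e he0 B (e-1) (by omega)]; simp
        exact hqc.trans ⟨by omega, by omega⟩
      rw [hs]; exact bdd_lt _
    · have hs : {a : ℤ | a * (e:ℤ) + (i.val:ℤ) - 1 ∈ C}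
          = {a : ℤ | a < charge (quotComp e B (i.val - 1))} := by
        ext a
        simp only [Set.mem_setOf_eq]
        rw [show a * (e:ℤ) + (i.val:ℤ) - 1 = a * (e:ℤ) + ((i.val - 1 : ℕ):ℤ) from by
          push_cast [Nat.cast_sub (by omega : 1 ≤ i.val)]; ring]
        have hqc : (a ∈ quotComp e C (i.val - 1)) ↔ (a < charge (quotComp e B (i.val - 1))) := by
          rw [quot_core e he0 B (i.val - 1) (by omega)]; simp
        exact hqc
      rw [hs]; exact bdd_lt _
  have hBq : Bdd (quotComp e B (e-1)) := bdd_quot e he0 B hBdd _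
  have hCq1 : Bdd (quotComp e C (e-1)) := by
    rw [quot_core e he0 B (e-1) (by omega)]; exact bdd_lt _
  rw [delta_eq e he0 B i hBX hYB, delta_eq e he0 C i hCX hYC, hXCc,
    key B hBq (fun _ _ => rfl), key C hCq1 hCq]
end

section
/- Let B^{(1)}, …, B^{(ℓ)} be β-sets, let quot_e(U(B^{(1)}, …, B^{(ℓ)})) = (B_0, …, B_{e−1}) and quot_e(B^{(j)}) = (B^{(j)}_0, …, B^{(j)}_{e−1}) for each j ∈ {1, …, ℓ}. Then s(B_i) = Σ_{j=1}^{ℓ} s(B^{(j)}_i) for all i ∈ {0, …, e−1}; in particular, s(U(B^{(1)}, …, B^{(ℓ)})) = Σ_{j=1}^{ℓ} s(B^{(j)}). -/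
lemma isBetaSet_of {B : Set ℤ} (m μ : ℤ) (hm : ∀ x ∈ B, x ≤ m) (hμ : ∀ x, x < μ → x ∈ B) :
    IsBetaSet B := by
  constructor
  · obtain ⟨ub, h1, h2⟩ := Int.exists_greatest_of_bdd (P := fun z => z ∈ B)
      ⟨m, hm⟩ ⟨μ - 1, hμ _ (by omega)⟩
    exact ⟨ub, h1, h2⟩
  · obtain ⟨lb, h1, h2⟩ := Int.exists_least_of_bdd (P := fun z => z ∉ B)
      ⟨μ, fun z hz => by by_contra h; exact hz (hμ z (by omega))⟩
      ⟨m + 1, fun h => by have := hm _ h; omega⟩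
    exact ⟨lb, h1, h2⟩

lemma IsBetaSet.bounds {B : Set ℤ} (h : IsBetaSet B) :
    ∃ m μ : ℤ, (∀ x ∈ B, x ≤ m) ∧ (∀ x, x < μ → x ∈ B) := by
  obtain ⟨⟨m, _, hm⟩, ⟨μ, _, hμ⟩⟩ := h
  exact ⟨m, μ, hm, fun x hx => by by_contra h; have := hμ x h; omega⟩

lemma ncard_iUnion_of_disjoint {ι : Type*} [Fintype ι] (S : ι → Set ℤ)
    (hfin : ∀ i, (S i).Finite) (hdisj : ∀ i j, i ≠ j → Disjoint (S i) (S j)) :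
    (⋃ i, S i).ncard = ∑ i, (S i).ncard := by
  classical
  have h1 : (⋃ i, S i) = ↑(Finset.univ.biUnion fun i => (hfin i).toFinset) := by
    simp [Set.Finite.coe_toFinset]
  rw [h1, Set.ncard_coe_finset, Finset.card_biUnion]
  · exact Finset.sum_congr rfl fun i _ => by
      rw [← Set.ncard_coe_finset, Set.Finite.coe_toFinset]
  · intro i _ j _ hij
    exact Set.Finite.disjoint_toFinset.mpr (hdisj i j hij)

lemma charge_trunc (B : Set ℤ) (M : ℤ) (hM : M ≤ 0) (h1 : ∀ x, x < M → x ∈ B)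
    (h2 : (B ∩ {x | 0 ≤ x}).Finite) :
    charge B = ((B ∩ {x | M ≤ x}).ncard : ℤ) + M := by
  have hIco : (Set.Ico M 0).Finite := Set.finite_Ico M 0
  have hNeq : ({x : ℤ | x < 0} \ B) = Set.Ico M 0 \ B := by
    ext x
    simp only [Set.mem_diff, Set.mem_setOf_eq, Set.mem_Ico]
    constructor
    · rintro ⟨hx, hxB⟩
      refine ⟨⟨?_, hx⟩, hxB⟩
      by_contra h; exact hxB (h1 x (by omega))
    · rintro ⟨⟨_, hx⟩, hxB⟩; exact ⟨hx, hxB⟩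
  have hNfin : ({x : ℤ | x < 0} \ B).Finite := hNeq ▸ (hIco.diff : (Set.Ico M 0 \ B).Finite)
  have hQfin : (Set.Ico M 0 ∩ B).Finite := hIco.inter_of_left B
  have hsplit1 : (Set.Ico M 0).ncard = (Set.Ico M 0 ∩ B).ncard + (Set.Ico M 0 \ B).ncard := by
    conv_lhs => rw [← Set.inter_union_diff (Set.Ico M 0) B]
    rw [Set.ncard_union_eq ?_ hQfin (hIco.diff : (Set.Ico M 0 \ B).Finite)]
    rw [Set.disjoint_left]
    rintro x ⟨_, hxB⟩ ⟨_, hxB'⟩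
    exact hxB' hxB
  have hIcard : (Set.Ico M 0).ncard = (-M).toNat := by
    rw [← Finset.coe_Ico, Set.ncard_coe_finset, Int.card_Ico]
    omega
  have hdisjPQ : Disjoint (B ∩ {x : ℤ | 0 ≤ x}) (Set.Ico M 0 ∩ B) := by
    rw [Set.disjoint_left]
    rintro x ⟨_, hx⟩ ⟨⟨_, hx'⟩, _⟩
    simp only [Set.mem_setOf_eq] at hx; omega
  have hsplit2 : (B ∩ {x | M ≤ x}).ncard
      = (B ∩ {x | 0 ≤ x}).ncard + (Set.Ico M 0 ∩ B).ncard := by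
    rw [← Set.ncard_union_eq hdisjPQ h2 hQfin]
    congr 1
    ext x
    simp only [Set.mem_union, Set.mem_inter_iff, Set.mem_setOf_eq, Set.mem_Ico]
    constructor
    · rintro ⟨hxB, hx⟩
      rcases le_or_gt 0 x with h | h
      · exact Or.inl ⟨hxB, h⟩
      · exact Or.inr ⟨⟨hx, h⟩, hxB⟩
    · rintro (⟨hxB, hx⟩ | ⟨⟨hx, _⟩, hxB⟩) <;> exact ⟨hxB, by omega⟩
  unfold charge
  rw [hNeq]
  have := hsplit1
  rw [hIcard] at this
  rw [hsplit2]
  omega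

lemma key_interleave {ι : Type*} [Fintype ι] (L : ℕ) (hL : 1 ≤ L) (hcard : Fintype.card ι = L)
    (c : ι → ℤ) (hcinj : Function.Injective c) (hc0 : ∀ i, 0 ≤ c i) (hcL : ∀ i, c i < (L : ℤ))
    (C : ι → Set ℤ) (hC : ∀ i, IsBetaSet (C i)) :
    charge (⋃ i, (fun a => a * (L : ℤ) + c i) '' C i) = ∑ i, charge (C i) := by
  classical
  have hne : Nonempty ι := Fintype.card_pos_iff.mp (by omega)
  have hLpos : (0 : ℤ) < L := by exact_mod_cast hL
  choose m μ hm hμ using fun i => (hC i).bounds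
  set M : ℤ := Finset.univ.inf' (Finset.univ_nonempty) (fun i => min (μ i) 0) with hM
  have hMle : ∀ i, M ≤ μ i ∧ M ≤ 0 := by
    intro i
    have := Finset.inf'_le (fun i => min (μ i) 0) (Finset.mem_univ i)
    constructor <;> omega
  have hM0 : M ≤ 0 := (hMle (Classical.arbitrary ι)).2
  -- surjectivity of c onto [0, L)
  have hsurj : ∀ r : ℤ, 0 ≤ r → r < (L : ℤ) → ∃ i, c i = r := by
    intro r hr0 hrL
    have hsub : Finset.univ.image c ⊆ Finset.Ico (0 : ℤ) (L : ℤ) := by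
      intro x hx
      simp only [Finset.mem_image] at hx
      obtain ⟨i, _, rfl⟩ := hx
      simp [Finset.mem_Ico, hc0 i, hcL i]
    have hcardeq : (Finset.Ico (0 : ℤ) (L : ℤ)).card ≤ (Finset.univ.image c).card := by
      rw [Finset.card_image_of_injective _ hcinj, Int.card_Ico, Finset.card_univ, hcard]
      omega
    have := Finset.eq_of_subset_of_card_le hsub hcardeq
    have hr : r ∈ Finset.univ.image c := by
      rw [this]; simp [Finset.mem_Ico]; omega
    simpa using hr
  set D := ⋃ i, (fun a => a * (L : ℤ) + c i) '' C i with hD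
  -- cover
  have hcover : ∀ x, x < M * L → x ∈ D := by
    intro x hx
    obtain ⟨i, hci⟩ := hsurj (x % L) (Int.emod_nonneg x (by omega)) (Int.emod_lt_of_pos x hLpos)
    have hxeq : x = (x / L) * L + c i := by
      rw [hci, mul_comm]
      have := Int.mul_ediv_add_emod x (L : ℤ)
      omega
    have ha : x / (L : ℤ) < M := by
      by_contra h
      push_neg at h
      have : M * L ≤ (x / L) * L := by
        exact mul_le_mul_of_nonneg_right h (by omega)
      have h2 : 0 ≤ x % L := Int.emod_nonneg x (by omega)
      have := Int.mul_ediv_add_emod x (L : ℤ)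
      nlinarith
    have haC : x / (L : ℤ) ∈ C i := hμ i _ (lt_of_lt_of_le ha (hMle i).1)
    exact Set.mem_iUnion.mpr ⟨i, ⟨x / L, haC, hxeq.symm⟩⟩
  -- truncation identity
  have htrunc : D ∩ {x | M * L ≤ x}
      = ⋃ i, (fun a => a * (L : ℤ) + c i) '' (C i ∩ {a | M ≤ a}) := by
    ext x
    simp only [Set.mem_inter_iff, Set.mem_iUnion, Set.mem_image, Set.mem_setOf_eq, hD]
    constructor
    · rintro ⟨⟨i, a, haC, rfl⟩, hge⟩
      refine ⟨i, a, ⟨haC, ?_⟩, rfl⟩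
      by_contra h
      push_neg at h
      have h2 : a * L ≤ (M - 1) * L := mul_le_mul_of_nonneg_right (by omega) (by omega)
      have := hcL i
      nlinarith
    · rintro ⟨i, a, ⟨haC, haM⟩, rfl⟩
      refine ⟨⟨i, a, haC, rfl⟩, ?_⟩
      have : M * L ≤ a * L := mul_le_mul_of_nonneg_right haM (by omega)
      have := hc0 i
      omega
  -- finiteness of truncated components
  have hfinC : ∀ i, (C i ∩ {a : ℤ | M ≤ a}).Finite := by
    intro i
    apply (Set.finite_Icc M (m i)).subset
    rintro a ⟨haC, haM⟩
    exact ⟨haM, hm i a haC⟩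
  have hfinIm : ∀ i, ((fun a => a * (L : ℤ) + c i) '' (C i ∩ {a | M ≤ a})).Finite :=
    fun i => ((hfinC i).image _)
  have hginj : ∀ i, Function.Injective (fun a : ℤ => a * (L : ℤ) + c i) := by
    intro i a b hab
    simp only at hab
    have : a * (L : ℤ) = b * L := by omega
    exact mul_right_cancel₀ (by omega) this
  have hdisj : ∀ i j, i ≠ j →
      Disjoint ((fun a => a * (L : ℤ) + c i) '' (C i ∩ {a | M ≤ a}))
        ((fun a => a * (L : ℤ) + c j) '' (C j ∩ {a | M ≤ a})) := by
    intro i j hij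
    rw [Set.disjoint_left]
    rintro x ⟨a, _, rfl⟩ ⟨b, _, hab⟩
    simp only at hab
    have hcij : c i = c j := by
      rcases lt_trichotomy a b with h | h | h
      · have : a * (L : ℤ) + L ≤ b * L := by nlinarith
        have := hc0 i; have := hc0 j; have := hcL i; have := hcL j
        omega
      · subst h; omega
      · have : b * (L : ℤ) + L ≤ a * L := by nlinarith
        have := hc0 i; have := hc0 j; have := hcL i; have := hcL j
        omega
    exact hij (hcinj hcij)
  -- charge of D via truncation
  have hUfin : (⋃ i, (fun a => a * (L : ℤ) + c i) '' (C i ∩ {a | M ≤ a})).Finite :=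
    Set.finite_iUnion hfinIm
  have hDtrfin : (D ∩ {x : ℤ | M * L ≤ x}).Finite := htrunc ▸ hUfin
  have hDfin : (D ∩ {x : ℤ | 0 ≤ x}).Finite := by
    apply hDtrfin.subset
    rintro x ⟨hxD, hx⟩
    refine ⟨hxD, ?_⟩
    simp only [Set.mem_setOf_eq] at hx ⊢
    have : M * (L : ℤ) ≤ 0 := mul_nonpos_of_nonpos_of_nonneg hM0 (by omega)
    omega
  have hchD := charge_trunc D (M * L) (mul_nonpos_of_nonpos_of_nonneg hM0 (by omega))
    hcover hDfin
  rw [htrunc, ncard_iUnion_of_disjoint _ hfinIm hdisj] at hchD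
  have himc : ∀ i, ((fun a => a * (L : ℤ) + c i) '' (C i ∩ {a | M ≤ a})).ncard
      = (C i ∩ {a | M ≤ a}).ncard := fun i => Set.ncard_image_of_injective _ (hginj i)
  have hchC : ∀ i, charge (C i) = ((C i ∩ {a : ℤ | M ≤ a}).ncard : ℤ) + M := fun i =>
    charge_trunc (C i) M hM0 (fun x hx => hμ i x (lt_of_lt_of_le hx (hMle i).1))
      ((Set.finite_Icc 0 (m i)).subset (by rintro x ⟨hxC, hx⟩; exact ⟨hx, hm i x hxC⟩))
  simp only [himc] at hchD
  rw [hchD, Finset.sum_congr rfl (fun i _ => hchC i), Finset.sum_add_distrib,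
    Finset.sum_const, Finset.card_univ, hcard]
  push_cast
  ring

lemma isBetaSet_quotComp (e : ℕ) (he : 1 ≤ e) (B : Set ℤ) (hB : IsBetaSet B) (i : ℕ) :
    IsBetaSet (quotComp e B i) := by
  obtain ⟨m, μ, hm, hμ⟩ := hB.bounds
  have hepos : (1 : ℤ) ≤ e := by exact_mod_cast he
  have hi : (0 : ℤ) ≤ (i : ℤ) := Int.natCast_nonneg i
  apply isBetaSet_of (m := |m|) (μ := -(|μ| + e + i))
  · intro a ha
    have h := hm _ ha
    have h2 := le_abs_self m
    rcases le_or_gt 0 a with h3 | h3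
    · nlinarith [abs_nonneg m]
    · nlinarith [abs_nonneg m]
  · intro a ha
    apply hμ
    have h2 := neg_abs_le μ
    have ha0 : a ≤ 0 := by have := abs_nonneg μ; omega
    have h4 : a * (e : ℤ) ≤ a := by
      nlinarith [mul_nonneg (neg_nonneg.mpr ha0) (by linarith : (0 : ℤ) ≤ (e : ℤ) - 1)]
    omega

lemma decomp_quot (e : ℕ) (he : 1 ≤ e) (B : Set ℤ) :
    B = ⋃ b : Fin e, (fun a => a * (e : ℤ) + (((b : ℕ) : ℤ))) '' quotComp e B (b : ℕ) := by
  have hepos : (0 : ℤ) < e := by exact_mod_cast he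
  ext x
  simp only [Set.mem_iUnion, Set.mem_image, quotComp, Set.mem_setOf_eq]
  constructor
  · intro hx
    have h1 : 0 ≤ x % e := Int.emod_nonneg x (by omega)
    have h2 : x % e < e := Int.emod_lt_of_pos x hepos
    have h3 : ((x % e).toNat : ℤ) = x % e := Int.toNat_of_nonneg h1
    refine ⟨⟨(x % e).toNat, by omega⟩, x / e, ?_, ?_⟩
    · have h4 := Int.mul_ediv_add_emod x (e : ℤ)
      have h5 : x / (e : ℤ) * e + ((x % e).toNat : ℤ) = x := by rw [h3, mul_comm]; omega
      show x / (e : ℤ) * e + ((x % e).toNat : ℤ) ∈ B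
      rw [h5]; exact hx
    · simp only
      rw [h3, mul_comm]
      have := Int.mul_ediv_add_emod x (e : ℤ)
      omega
  · rintro ⟨b, a, ha, rfl⟩
    exact ha

lemma charge_decomp (e : ℕ) (he : 1 ≤ e) (B : Set ℤ) (hB : IsBetaSet B) :
    charge B = ∑ b : Fin e, charge (quotComp e B (b : ℕ)) := by
  have h := key_interleave (ι := Fin e) e he (Fintype.card_fin e)
    (fun b => ((b : ℕ) : ℤ))
    (fun a b h => by
      have h' : ((a : ℕ) : ℤ) = ((b : ℕ) : ℤ) := h
      exact Fin.ext (by exact_mod_cast h'))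
    (fun b => Int.natCast_nonneg _)
    (fun b => by show ((b : ℕ) : ℤ) < (e : ℤ); exact_mod_cast b.isLt)
    (fun b => quotComp e B (b : ℕ))
    (fun b => isBetaSet_quotComp e he B hB (b : ℕ))
  rw [← decomp_quot e he B] at h
  exact h

lemma upsilon_form (e ℓ jj : ℕ) (x q r : ℤ) (hx : x = q * (e : ℤ) + r)
    (hr0 : 0 ≤ r) (hre : r < (e : ℤ)) :
    upsilon e ℓ jj x = q * (e : ℤ) * (ℓ : ℤ) + ((ℓ : ℤ) - (jj : ℤ)) * (e : ℤ) + r := by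
  have h1 : x % (e : ℤ) = r := by
    rw [hx, add_comm, Int.add_mul_emod_self_right, Int.emod_eq_of_lt hr0 hre]
  unfold upsilon
  rw [h1, hx]
  ring

lemma quot_uglov (e ℓ : ℕ) (he : 1 ≤ e) (B : Fin ℓ → Set ℤ) (i : ℕ) (hi : i < e) :
    quotComp e (uglovU e ℓ B) i
      = ⋃ j : Fin ℓ, (fun a => a * (ℓ : ℤ) + ((ℓ : ℤ) - 1 - ((j : ℕ) : ℤ))) ''
          quotComp e (B j) i := by
  have hepos : (0 : ℤ) < e := by exact_mod_cast he
  have hie : (i : ℤ) < e := by exact_mod_cast hi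
  have hi0 : (0 : ℤ) ≤ (i : ℤ) := Int.natCast_nonneg i
  ext a
  simp only [quotComp, Set.mem_setOf_eq, uglovU, Set.mem_iUnion, Set.mem_image]
  constructor
  · rintro ⟨j, x, hx, heq⟩
    have hx_eq : x = (x / (e : ℤ)) * e + x % e := by
      have h := Int.mul_ediv_add_emod x (e : ℤ)
      linarith [mul_comm (e : ℤ) (x / (e : ℤ))]
    have hr0 : 0 ≤ x % (e : ℤ) := Int.emod_nonneg x (by omega)
    have hre : x % (e : ℤ) < e := Int.emod_lt_of_pos x hepos
    set q := x / (e : ℤ)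
    set r := x % (e : ℤ)
    rw [upsilon_form e ℓ (j.1 + 1) x q r hx_eq hr0 hre] at heq
    have hj1 : ((j.1 + 1 : ℕ) : ℤ) = ((j : ℕ) : ℤ) + 1 := by push_cast; ring
    rw [hj1] at heq
    have hri : r = i := by
      have hdvd : ((i : ℤ) - r) = (e : ℤ) * (q * ℓ + ((ℓ : ℤ) - ((j : ℕ) : ℤ) - 1) - a) := by
        linear_combination -heq
      rcases lt_trichotomy (q * (ℓ : ℤ) + ((ℓ : ℤ) - ((j : ℕ) : ℤ) - 1) - a) 0 with h | h | h
      · nlinarith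
      · rw [h] at hdvd; omega
      · nlinarith
    refine ⟨j, q, ?_, ?_⟩
    · show q * (e : ℤ) + (i : ℤ) ∈ B j
      rw [← hri, ← hx_eq]
      exact hx
    · show q * (ℓ : ℤ) + ((ℓ : ℤ) - 1 - ((j : ℕ) : ℤ)) = a
      have h0 : (q * (ℓ : ℤ) + ((ℓ : ℤ) - 1 - ((j : ℕ) : ℤ)) - a) * e = 0 := by
        linear_combination heq - hri
      rcases mul_eq_zero.mp h0 with h | h
      · linarith
      · omega
  · rintro ⟨j, q, hq, heq⟩

    refine ⟨j, q * (e : ℤ) + i, hq, ?_⟩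
    rw [upsilon_form e ℓ (j.1 + 1) _ q (i : ℤ) rfl hi0 hie]
    have hj1 : ((j.1 + 1 : ℕ) : ℤ) = ((j : ℕ) : ℤ) + 1 := by push_cast; ring
    rw [hj1]
    linear_combination (e : ℤ) * heq

lemma isBetaSet_uglov (e ℓ : ℕ) (he : 1 ≤ e) (hl : 1 ≤ ℓ) (B : Fin ℓ → Set ℤ)
    (hB : ∀ j, IsBetaSet (B j)) : IsBetaSet (uglovU e ℓ B) := by
  have hne : Nonempty (Fin ℓ) := ⟨⟨0, by omega⟩⟩
  have hepos : (0 : ℤ) < e := by exact_mod_cast he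
  have hlpos : (0 : ℤ) < ℓ := by exact_mod_cast hl
  choose m μ hm hμ using fun j => (hB j).bounds
  set M : ℤ := Finset.univ.inf' (Finset.univ_nonempty) (fun j => min (μ j) 0) with hMdef
  have hMle : ∀ j, M ≤ μ j ∧ M ≤ 0 := by
    intro j
    have := Finset.inf'_le (fun j => min (μ j) 0) (Finset.mem_univ j)
    constructor <;> omega
  have hM0 : M ≤ 0 := (hMle (Classical.arbitrary _)).2
  apply isBetaSet_of
    (m := Finset.univ.sup' (Finset.univ_nonempty) (fun j => m j * ℓ + ℓ * e + e))
    (μ := M * (e * ℓ))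
  · -- upper bound
    intro x hx
    obtain ⟨j, y, hy, rfl⟩ := by
      simpa only [uglovU, Set.mem_iUnion, Set.mem_image] using hx
    have h1 : 0 ≤ y % (e : ℤ) := Int.emod_nonneg y (by omega)
    have h2 : y % (e : ℤ) < e := Int.emod_lt_of_pos y hepos
    have h3 : y - y % (e : ℤ) ≤ m j := by
      have := hm j y hy
      omega
    have h4 : (y - y % (e : ℤ)) * ℓ ≤ m j * ℓ := mul_le_mul_of_nonneg_right h3 (by omega)
    have h5 : ((ℓ : ℤ) - ((j.1 + 1 : ℕ) : ℤ)) * e ≤ ℓ * e := by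
      apply mul_le_mul_of_nonneg_right _ (by omega)
      have : (0 : ℤ) ≤ ((j.1 + 1 : ℕ) : ℤ) := Int.natCast_nonneg _
      omega
    calc upsilon e ℓ (j.1 + 1) y ≤ m j * ℓ + ℓ * e + e := by
          unfold upsilon; omega
      _ ≤ _ := Finset.le_sup' (fun j => m j * (ℓ : ℤ) + ℓ * e + e) (Finset.mem_univ j)
  · -- downward closure
    intro x hx
    have heℓ : (0 : ℤ) < (e : ℤ) * ℓ := by positivity
    set s := x % ((e : ℤ) * ℓ) with hs
    set q := x / ((e : ℤ) * ℓ) with hq'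
    have hs0 : 0 ≤ s := Int.emod_nonneg x (by omega)
    have hseℓ : s < (e : ℤ) * ℓ := Int.emod_lt_of_pos x heℓ
    have hx_eq : x = q * ((e : ℤ) * ℓ) + s := by
      have h := Int.mul_ediv_add_emod x ((e : ℤ) * ℓ)
      linarith [mul_comm ((e : ℤ) * ℓ) q]
    set b := s % (e : ℤ) with hb'
    set r := s / (e : ℤ) with hr'
    have hb0 : 0 ≤ b := Int.emod_nonneg s (by omega)
    have hbe : b < e := Int.emod_lt_of_pos s hepos
    have hs_eq : s = r * (e : ℤ) + b := by
      have h := Int.mul_ediv_add_emod s (e : ℤ)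
      linarith [mul_comm (e : ℤ) r]
    have hr0 : 0 ≤ r := Int.ediv_nonneg hs0 (by omega)
    have hrℓ : r < ℓ := by
      by_contra h
      push_neg at h
      have : (ℓ : ℤ) * e ≤ r * e := mul_le_mul_of_nonneg_right h (by omega)
      nlinarith
    have hqM : q < M := by
      by_contra h
      push_neg at h
      have : M * ((e : ℤ) * ℓ) ≤ q * ((e : ℤ) * ℓ) := mul_le_mul_of_nonneg_right h (by omega)
      omega
    -- the index j with ℓ - (j+1) = r
    have hrtoNat : ((r.toNat : ℕ) : ℤ) = r := Int.toNat_of_nonneg hr0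
    have hrlt : r.toNat < ℓ := by omega
    refine Set.mem_iUnion.mpr ⟨⟨ℓ - 1 - r.toNat, by omega⟩, q * e + b, ?_, ?_⟩
    · apply hμ
      have hqe : q * (e : ℤ) ≤ (M - 1) * e := mul_le_mul_of_nonneg_right (by omega) (by omega)
      have hMe : M * (e : ℤ) ≤ M := by nlinarith
      have := (hMle ⟨ℓ - 1 - r.toNat, by omega⟩).1
      nlinarith
    · rw [upsilon_form e ℓ _ _ q b rfl hb0 hbe]
      have hcast : (((ℓ - 1 - r.toNat : ℕ) + 1 : ℕ) : ℤ) = (ℓ : ℤ) - r := by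
        push_cast [Nat.sub_add_cancel]
        omega
      rw [hcast, hx_eq, hs_eq]
      ring


/-- the charges of the e-quotient components of U(B^{(1)}, …, B^{(ℓ)}) are the
sums of those of the B^{(j)}; in particular s(U(B^{(1)},…,B^{(ℓ)})) = Σ_j s(B^{(j)}). -/
theorem stmt6 (e ℓ : ℕ) (he : 2 ≤ e) (hl : 1 ≤ ℓ) (B : Fin ℓ → Set ℤ)
    (hB : ∀ j, IsBetaSet (B j)) :
    (∀ i < e, charge (quotComp e (uglovU e ℓ B) i) = ∑ j : Fin ℓ, charge (quotComp e (B j) i)) ∧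
      charge (uglovU e ℓ B) = ∑ j : Fin ℓ, charge (B j) := by
  have he1 : 1 ≤ e := by omega
  have hpart1 : ∀ i < e, charge (quotComp e (uglovU e ℓ B) i)
      = ∑ j : Fin ℓ, charge (quotComp e (B j) i) := by
    intro i hi
    rw [quot_uglov e ℓ he1 B i hi]
    exact key_interleave (ι := Fin ℓ) ℓ hl (Fintype.card_fin ℓ)
      (fun j => (ℓ : ℤ) - 1 - ((j : ℕ) : ℤ))
      (fun a b h => by
        have h' : ((a : ℕ) : ℤ) = ((b : ℕ) : ℤ) := by dsimp at h; omega
        exact Fin.ext (by exact_mod_cast h'))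
      (fun j => by
        have h1 : (j : ℕ) < ℓ := j.isLt
        have h2 : ((j : ℕ) : ℤ) < (ℓ : ℤ) := by exact_mod_cast h1
        omega)
      (fun j => by
        have h1 : (0 : ℤ) ≤ ((j : ℕ) : ℤ) := Int.natCast_nonneg _
        have h2 : (1 : ℤ) ≤ (ℓ : ℤ) := by exact_mod_cast hl
        omega)
      (fun j => quotComp e (B j) i)
      (fun j => isBetaSet_quotComp e he1 (B j) (hB j) i)
  refine ⟨hpart1, ?_⟩
  have hU := isBetaSet_uglov e ℓ he1 hl B hB
  rw [charge_decomp e he1 _ hU]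
  have hbb : ∀ b : Fin e, charge (quotComp e (uglovU e ℓ B) (b : ℕ))
      = ∑ j : Fin ℓ, charge (quotComp e (B j) (b : ℕ)) := fun b => hpart1 _ b.isLt
  rw [Finset.sum_congr rfl (fun b _ => hbb b), Finset.sum_comm]
  exact Finset.sum_congr rfl (fun j _ => (charge_decomp e he1 (B j) (hB j)).symm)
end

section
/- For any β-sets B^{(1)}, …, B^{(ℓ)} and any i ∈ ℤ/eℤ, δ_i(U(B^{(1)}, …, B^{(ℓ)})) = Σ_{j=1}^{ℓ} δ_i(B^{(j)}) + (ℓ − 1)·[i = 0], where [i = 0] equals 1 if i = 0 and 0 otherwise. -/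
-- div/mod uniqueness helper
lemma divmod_unique {d a a' r r' : ℤ} (hd : 0 < d) (hr : 0 ≤ r) (hrd : r < d)
    (hr' : 0 ≤ r') (hrd' : r' < d) (h : d * a + r = d * a' + r') : a = a' ∧ r = r' := by
  have h1 : (r + a * d) / d = a := by
    rw [Int.add_mul_ediv_right _ _ hd.ne', Int.ediv_eq_zero_of_lt hr hrd, zero_add]
  have h2 : (r' + a' * d) / d = a' := by
    rw [Int.add_mul_ediv_right _ _ hd.ne', Int.ediv_eq_zero_of_lt hr' hrd', zero_add]
  have he : r + a * d = r' + a' * d := by linarith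
  have : a = a' := by rw [← h1, ← h2, he]
  exact ⟨this, by nlinarith⟩

lemma window_le {d M a r : ℤ} (hd : 0 < d) (hr : 0 ≤ r) (hrd : r < d) :
    d * a + r ≤ d * M ↔ (if r = 0 then a ≤ M else a < M) := by
  split_ifs with h
  · subst h; simp [mul_le_mul_iff_right₀ hd]
  · constructor
    · intro hle
      by_contra hc; push_neg at hc
      have hr1 : 1 ≤ r := by omega
      nlinarith
    · intro hlt
      have : a + 1 ≤ M := hlt
      nlinarith

lemma window_lt {d M a r : ℤ} (hd : 0 < d) (hr : 0 ≤ r) (hrd : r < d) :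
    d * a + r < d * M ↔ a < M := by
  constructor
  · intro hle
    by_contra hc; push_neg at hc
    nlinarith
  · intro hlt
    have : a + 1 ≤ M := hlt
    nlinarith

lemma window_gt {d M a r : ℤ} (hd : 0 < d) (hr : 0 ≤ r) (hrd : r < d) :
    -(d * M) < d * a + r ↔ (if r = 0 then -M < a else -M ≤ a) := by
  split_ifs with h
  · subst h
    constructor
    · intro hle; by_contra hc; push_neg at hc; nlinarith
    · intro hlt; have : -M + 1 ≤ a := hlt; nlinarith
  · constructor
    · intro hle; by_contra hc; push_neg at hc
      have : a + 1 ≤ -M := hc; nlinarith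
    · intro hlt
      have hr1 : 1 ≤ r := by omega
      nlinarith

lemma window_ge {d M a r : ℤ} (hd : 0 < d) (hr : 0 ≤ r) (hrd : r < d) :
    -(d * M) ≤ d * a + r ↔ -M ≤ a := by
  constructor
  · intro hle; by_contra hc; push_neg at hc
    have : a + 1 ≤ -M := hc; nlinarith
  · intro hlt; nlinarith

lemma upsilon_eq (e ℓ j : ℕ) (x : ℤ) :
    upsilon e ℓ j x = (e : ℤ) * ℓ * (x / e) + (((ℓ : ℤ) - j) * e + x % e) := by
  have h := Int.mul_ediv_add_emod x (e : ℤ)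
  unfold upsilon
  linear_combination (-(ℓ : ℤ)) * h

lemma emod_bounds (e : ℕ) (he : 0 < e) (x : ℤ) : 0 ≤ x % e ∧ x % e < e :=
  ⟨Int.emod_nonneg x (by exact_mod_cast he.ne'), Int.emod_lt_of_pos x (by exact_mod_cast he)⟩

lemma upsilon_r_bounds (e ℓ j : ℕ) (he : 0 < e) (hj1 : 1 ≤ j) (hj2 : j ≤ ℓ) (x : ℤ) :
    0 ≤ ((ℓ : ℤ) - j) * e + x % e ∧ ((ℓ : ℤ) - j) * e + x % e < (e : ℤ) * ℓ := by
  obtain ⟨h1, h2⟩ := emod_bounds e he x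
  have hj1' : (1 : ℤ) ≤ (j : ℤ) := by exact_mod_cast hj1
  have hj2' : (j : ℤ) ≤ (ℓ : ℤ) := by exact_mod_cast hj2
  have he' : (0 : ℤ) < (e : ℤ) := by exact_mod_cast he
  constructor
  · have := mul_nonneg (by linarith : (0:ℤ) ≤ (ℓ:ℤ) - j) he'.le
    linarith
  · nlinarith

lemma upsilon_inj (e ℓ : ℕ) (he : 0 < e) {j j' : ℕ} (hj1 : 1 ≤ j) (hj2 : j ≤ ℓ)
    (hj1' : 1 ≤ j') (hj2' : j' ≤ ℓ) {x y : ℤ}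
    (h : upsilon e ℓ j x = upsilon e ℓ j' y) : j = j' ∧ x = y := by
  rw [upsilon_eq, upsilon_eq] at h
  have he' : (0:ℤ) < (e:ℤ) := by exact_mod_cast he
  have hl' : (0:ℤ) < (ℓ:ℤ) := by exact_mod_cast hj1.trans hj2
  obtain ⟨hr1, hr2⟩ := upsilon_r_bounds e ℓ j he hj1 hj2 x
  obtain ⟨hr1', hr2'⟩ := upsilon_r_bounds e ℓ j' he hj1' hj2' y
  obtain ⟨ha, hr⟩ := divmod_unique (mul_pos he' hl') hr1 hr2 hr1' hr2' h
  obtain ⟨hm1, hm2⟩ := emod_bounds e he x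
  obtain ⟨hm1', hm2'⟩ := emod_bounds e he y
  have h' : (e:ℤ) * ((ℓ:ℤ) - j) + x % e = (e:ℤ) * ((ℓ:ℤ) - j') + y % e := by
    linear_combination hr
  obtain ⟨hjj, hmm⟩ := divmod_unique he' hm1 hm2 hm1' hm2' h'
  have hj : j = j' := by omega
  refine ⟨hj, ?_⟩
  have hx := Int.mul_ediv_add_emod x (e : ℤ)
  have hy := Int.mul_ediv_add_emod y (e : ℤ)
  rw [ha, hmm] at hx
  linarith

lemma upsilon_cast (e ℓ j : ℕ) (he : 0 < e) (x : ℤ) :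
    ((upsilon e ℓ j x : ℤ) : ZMod e) = (x : ZMod e) := by
  haveI : NeZero e := ⟨he.ne'⟩
  have h := Int.mul_ediv_add_emod x (e : ℤ)
  have hd : (e : ℤ) ∣ upsilon e ℓ j x - x :=
    ⟨(x / e) * ((ℓ:ℤ) - 1) + ((ℓ:ℤ) - j), by unfold upsilon; linear_combination (-((ℓ:ℤ) - 1)) * h⟩
  have h0 : ((upsilon e ℓ j x - x : ℤ) : ZMod e) = 0 := by
    rw [ZMod.intCast_zmod_eq_zero_iff_dvd]; exact_mod_cast hd
  push_cast at h0
  exact sub_eq_zero.mp h0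

lemma emod_zero_iff (e : ℕ) (he : 0 < e) (x : ℤ) : x % (e:ℤ) = 0 ↔ ((x : ZMod e) = 0) := by
  haveI : NeZero e := ⟨he.ne'⟩
  rw [ZMod.intCast_zmod_eq_zero_iff_dvd]
  exact Int.dvd_iff_emod_eq_zero.symm

lemma upsilon_window (e ℓ : ℕ) (he : 0 < e) {j : ℕ} (hj1 : 1 ≤ j) (hj2 : j ≤ ℓ) (M y : ℤ) :
    (-((e:ℤ) * ℓ * M) < upsilon e ℓ j y ∧ upsilon e ℓ j y ≤ (e:ℤ) * ℓ * M) ↔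
      (if y % (e:ℤ) = 0 ∧ j = ℓ then (-((e:ℤ) * M) < y ∧ y ≤ (e:ℤ) * M)
       else (-((e:ℤ) * M) ≤ y ∧ y < (e:ℤ) * M)) := by
  have he' : (0:ℤ) < (e:ℤ) := by exact_mod_cast he
  have hl' : (0:ℤ) < (ℓ:ℤ) := by exact_mod_cast hj1.trans hj2
  obtain ⟨hb1, hb2⟩ := emod_bounds e he y
  obtain ⟨hr1, hr2⟩ := upsilon_r_bounds e ℓ j he hj1 hj2 y
  have hy := Int.mul_ediv_add_emod y (e : ℤ)
  have hde : (0:ℤ) < (e:ℤ) * ℓ := mul_pos he' hl'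
  have hiff0 : (((ℓ:ℤ) - j) * e + y % e = 0) ↔ (y % (e:ℤ) = 0 ∧ j = ℓ) := by
    constructor
    · intro h0
      have hj2' : (j : ℤ) ≤ (ℓ : ℤ) := by exact_mod_cast hj2
      have hnn : 0 ≤ ((ℓ:ℤ) - j) * e := mul_nonneg (by linarith) he'.le
      have hb0 : y % (e:ℤ) = 0 := by linarith
      have hz : ((ℓ:ℤ) - j) * e = 0 := by linarith
      rcases mul_eq_zero.mp hz with hz' | hz'
      · exact ⟨hb0, by omega⟩
      · omega
    · rintro ⟨h1, h2⟩
      subst h2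
      simp [h1]
  have g1 : (-((e:ℤ) * M) < y) ↔ (if y % (e:ℤ) = 0 then -M < y / (e:ℤ) else -M ≤ y / (e:ℤ)) := by
    conv_lhs => rw [← hy]
    exact window_gt he' hb1 hb2
  have g2 : (y ≤ (e:ℤ) * M) ↔ (if y % (e:ℤ) = 0 then y / (e:ℤ) ≤ M else y / (e:ℤ) < M) := by
    conv_lhs => rw [← hy]
    exact window_le he' hb1 hb2
  have g3 : (-((e:ℤ) * M) ≤ y) ↔ (-M ≤ y / (e:ℤ)) := by
    conv_lhs => rw [← hy]
    exact window_ge he' hb1 hb2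
  have g4 : (y < (e:ℤ) * M) ↔ (y / (e:ℤ) < M) := by
    conv_lhs => rw [← hy]
    exact window_lt he' hb1 hb2
  rw [upsilon_eq, window_gt hde hr1 hr2, window_le hde hr1 hr2, g1, g2, g3, g4]
  by_cases h1 : y % (e:ℤ) = 0 <;> by_cases h2 : j = ℓ <;>
    simp only [hiff0, h1, h2, if_pos, if_neg, and_true, and_false, true_and, false_and,
      not_true, not_false_iff, if_true, if_false] <;> simp_all <;> tauto


open Classical in
noncomputable def cnt (e : ℕ) (B : Set ℤ) (c : ZMod e) (K : ℤ) : ℕ :=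
  ((Finset.Ioc (-K) K).filter (fun x => x ∈ B ∧ (x : ZMod e) = c)).card

open Classical in
lemma card_Ico_filter (e : ℕ) (B : Set ℤ) (c : ZMod e) (K : ℤ) (hK : 0 < K)
    (hK0 : ((K : ℤ) : ZMod e) = 0) (hmem : -K ∈ B) (hnot : K ∉ B) :
    ((Finset.Ico (-K) K).filter (fun x => x ∈ B ∧ (x : ZMod e) = c)).card
      = cnt e B c K + (if c = 0 then 1 else 0) := by
  have h1 : Finset.Ico (-K) K = insert (-K) (Finset.Ioo (-K) K) := by
    ext x; simp only [Finset.mem_Ico, Finset.mem_insert, Finset.mem_Ioo]; omega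
  have h2 : Finset.Ioc (-K) K = insert K (Finset.Ioo (-K) K) := by
    ext x; simp only [Finset.mem_Ioc, Finset.mem_insert, Finset.mem_Ioo]; omega
  have hKcast : ((-K : ℤ) : ZMod e) = 0 := by push_cast [hK0]; ring
  rw [cnt, h1, h2, Finset.card_filter, Finset.card_filter,
    Finset.sum_insert (by simp), Finset.sum_insert (by simp)]
  have e1 : (if (-K ∈ B ∧ ((-K : ℤ) : ZMod e) = c) then 1 else 0) = (if c = 0 then 1 else 0) := by
    refine if_congr ⟨fun h => ?_, fun h => ⟨hmem, by rw [hKcast, h]⟩⟩ rfl rfl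
    rw [hKcast] at h
    exact h.2.symm
  have e2 : (if (K ∈ B ∧ ((K : ℤ) : ZMod e) = c) then 1 else 0) = 0 :=
    if_neg (fun h => hnot h.1)
  rw [e1, e2]
  omega

open Classical in
lemma deltaOf_eq_cnt (e : ℕ) (B : Set ℤ) (i : ZMod e) (K : ℤ)
    (hK : 0 < K) (hK0 : ((K : ℤ) : ZMod e) = 0)
    (hlo : ∀ x : ℤ, x ≤ -K → x ∈ B) (hhi : ∀ x ∈ B, x < K) :
    deltaOf e i B = (cnt e B i K : ℤ) - (cnt e B (i - 1) K : ℤ)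
      - (if i = 1 then 1 else 0) := by
  have hKB : K ∉ B := fun h => absurd (hhi K h) (lt_irrefl K)
  have hA : {x : ℤ | x ∈ B ∧ (x : ZMod e) = i ∧ x - 1 ∉ B}
      = ↑((Finset.Ioc (-K) K).filter (fun x => x ∈ B ∧ (x : ZMod e) = i ∧ x - 1 ∉ B)) := by
    ext x
    simp only [Set.mem_setOf_eq, Finset.coe_filter, Finset.mem_Ioc]
    constructor
    · rintro ⟨hx, hxi, hx1⟩
      refine ⟨⟨?_, (hhi x hx).le⟩, hx, hxi, hx1⟩
      by_contra hcon; push_neg at hcon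
      exact hx1 (hlo _ (by omega))
    · tauto
  have hC : {x : ℤ | x ∈ B ∧ (x : ZMod e) = i - 1 ∧ x + 1 ∉ B}
      = ↑((Finset.Ico (-K) K).filter (fun x => x ∈ B ∧ (x : ZMod e) = i - 1 ∧ x + 1 ∉ B)) := by
    ext x
    simp only [Set.mem_setOf_eq, Finset.coe_filter, Finset.mem_Ico]
    constructor
    · rintro ⟨hx, hxi, hx1⟩
      refine ⟨⟨?_, hhi x hx⟩, hx, hxi, hx1⟩
      by_contra hcon; push_neg at hcon
      exact hx1 (hlo _ (by omega))
    · tauto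
  rw [deltaOf, hA, hC, Set.ncard_coe_finset, Set.ncard_coe_finset]
  have key : (cnt e B i K)
        + ((Finset.Ico (-K) K).filter (fun x => x ∈ B ∧ (x:ZMod e) = i - 1 ∧ x + 1 ∉ B)).card
      = ((Finset.Ico (-K) K).filter (fun x => x ∈ B ∧ (x:ZMod e) = i - 1)).card
        + ((Finset.Ioc (-K) K).filter (fun x => x ∈ B ∧ (x:ZMod e) = i ∧ x - 1 ∉ B)).card := by
    rw [cnt, Finset.card_filter, Finset.card_filter, Finset.card_filter, Finset.card_filter]
    have hmap : ∀ g : ℤ → ℕ,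
        ∑ y ∈ Finset.Ico (-K) K, g y = ∑ x ∈ Finset.Ioc (-K) K, g (x - 1) := by
      intro g
      refine Finset.sum_nbij' (fun y => y + 1) (fun x => x - 1) ?_ ?_ ?_ ?_ ?_ <;>
        intros <;> simp_all [Finset.mem_Ioc, Finset.mem_Ico] <;> omega
    rw [hmap, hmap, ← Finset.sum_add_distrib, ← Finset.sum_add_distrib]
    refine Finset.sum_congr rfl fun x hx => ?_
    have hiff : (((x - 1 : ℤ) : ZMod e) = i - 1) ↔ ((x : ZMod e) = i) := by
      push_cast
      exact sub_left_inj
    have h11 : x - 1 + 1 = x := by ring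
    by_cases p : x ∈ B <;> by_cases q : (x - 1) ∈ B <;> by_cases rr : (x : ZMod e) = i <;>
      simp [p, q, rr, hiff, h11]
  have key2 := card_Ico_filter e B (i-1) K hK hK0 (hlo _ (by omega)) hKB
  rw [key2] at key
  by_cases hI : i = 1
  · rw [if_pos (by rw [sub_eq_zero, hI] : i - 1 = 0)] at key
    rw [if_pos hI]
    omega
  · rw [if_neg (fun h => hI (sub_eq_zero.mp h))] at key
    rw [if_neg hI]
    omega


open Classical in
lemma cnt_uglov (e ℓ : ℕ) (he : 0 < e) (hl : 0 < ℓ) (B : Fin ℓ → Set ℤ) (M : ℤ)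
    (hM : 0 < M) (hlo : ∀ j, (-((e:ℤ) * M)) ∈ B j) (hhi : ∀ j, ((e:ℤ) * M) ∉ B j)
    (i : ZMod e) :
    (cnt e (uglovU e ℓ B) i ((e:ℤ) * ℓ * M) : ℤ)
      = (∑ j : Fin ℓ, (cnt e (B j) i ((e:ℤ) * M) : ℤ))
        + ((ℓ:ℤ) - 1) * (if i = 0 then 1 else 0) := by
  have hjb : ∀ j : Fin ℓ, 1 ≤ j.1 + 1 ∧ j.1 + 1 ≤ ℓ := fun j => ⟨by omega, j.2⟩
  have hinj : ∀ j : Fin ℓ, Function.Injective (upsilon e ℓ (j.1 + 1)) := fun j a b h =>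
    (upsilon_inj e ℓ he (hjb j).1 (hjb j).2 (hjb j).1 (hjb j).2 h).2
  have hK' : (0:ℤ) < (e:ℤ) * M := by
    have : (0:ℤ) < (e:ℤ) := by exact_mod_cast he
    positivity
  have hK0' : (((e:ℤ) * M : ℤ) : ZMod e) = 0 := by
    push_cast
    simp [ZMod.natCast_self]
  have hmain :
      (Finset.Ioc (-((e:ℤ)*ℓ*M)) ((e:ℤ)*ℓ*M)).filter
          (fun x => x ∈ uglovU e ℓ B ∧ (x : ZMod e) = i)
        = Finset.univ.biUnion (fun j : Fin ℓ =>
            ((if i = 0 ∧ j.1 + 1 = ℓ then Finset.Ioc (-((e:ℤ)*M)) ((e:ℤ)*M)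
              else Finset.Ico (-((e:ℤ)*M)) ((e:ℤ)*M)).filter
              (fun y => y ∈ B j ∧ (y : ZMod e) = i)).image (upsilon e ℓ (j.1 + 1))) := by
    ext x
    simp only [Finset.mem_filter, Finset.mem_Ioc, Finset.mem_biUnion, Finset.mem_univ,
      Finset.mem_image, true_and, uglovU, Set.mem_iUnion, Set.mem_image]
    constructor
    · rintro ⟨⟨hx1, hx2⟩, ⟨j, y, hyB, rfl⟩, hxi⟩
      refine ⟨j, y, ?_, rfl⟩
      have hyi : (y : ZMod e) = i := by rw [← upsilon_cast e ℓ (j.1+1) he y]; exact hxi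
      have hw := (upsilon_window e ℓ he (hjb j).1 (hjb j).2 M y).mp ⟨hx1, hx2⟩
      have hcond : (y % (e:ℤ) = 0 ∧ j.1 + 1 = ℓ) ↔ (i = 0 ∧ j.1 + 1 = ℓ) := by
        rw [emod_zero_iff e he, hyi]
      simp only [hcond] at hw
      refine ⟨?_, hyB, hyi⟩
      split_ifs at hw ⊢ with h
      · rw [Finset.mem_Ioc]; exact hw
      · rw [Finset.mem_Ico]; exact hw
    · rintro ⟨j, y, hy, rfl⟩
      obtain ⟨hyT, hyB, hyi⟩ := hy
      have hxi : ((upsilon e ℓ (j.1+1) y : ℤ) : ZMod e) = i := by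
        rw [upsilon_cast e ℓ (j.1+1) he y]; exact hyi
      have hcond : (y % (e:ℤ) = 0 ∧ j.1 + 1 = ℓ) ↔ (i = 0 ∧ j.1 + 1 = ℓ) := by
        rw [emod_zero_iff e he, hyi]
      refine ⟨?_, ⟨j, y, hyB, rfl⟩, hxi⟩
      apply (upsilon_window e ℓ he (hjb j).1 (hjb j).2 M y).mpr
      simp only [hcond]
      split_ifs at hyT ⊢ with h
      · rw [Finset.mem_Ioc] at hyT; exact hyT
      · rw [Finset.mem_Ico] at hyT; exact hyT
  have hdisj : ∀ j ∈ (Finset.univ : Finset (Fin ℓ)), ∀ j' ∈ (Finset.univ : Finset (Fin ℓ)),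
      j ≠ j' → Disjoint
        (((if i = 0 ∧ j.1 + 1 = ℓ then Finset.Ioc (-((e:ℤ)*M)) ((e:ℤ)*M)
            else Finset.Ico (-((e:ℤ)*M)) ((e:ℤ)*M)).filter
            (fun y => y ∈ B j ∧ (y : ZMod e) = i)).image (upsilon e ℓ (j.1 + 1)))
        (((if i = 0 ∧ j'.1 + 1 = ℓ then Finset.Ioc (-((e:ℤ)*M)) ((e:ℤ)*M)
            else Finset.Ico (-((e:ℤ)*M)) ((e:ℤ)*M)).filter
            (fun y => y ∈ B j' ∧ (y : ZMod e) = i)).image (upsilon e ℓ (j'.1 + 1))) := by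
    intro j _ j' _ hne
    rw [Finset.disjoint_left]
    rintro x hx hx'
    rw [Finset.mem_image] at hx hx'
    obtain ⟨y, -, hy⟩ := hx
    obtain ⟨y', -, hy'⟩ := hx'
    have := (upsilon_inj e ℓ he (hjb j).1 (hjb j).2 (hjb j').1 (hjb j').2
      (hy.trans hy'.symm)).1
    exact hne (Fin.ext (by omega))
  have hcard : ∀ j : Fin ℓ,
      (((if i = 0 ∧ j.1 + 1 = ℓ then Finset.Ioc (-((e:ℤ)*M)) ((e:ℤ)*M)
          else Finset.Ico (-((e:ℤ)*M)) ((e:ℤ)*M)).filter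
          (fun y => y ∈ B j ∧ (y : ZMod e) = i)).image (upsilon e ℓ (j.1 + 1))).card
        = cnt e (B j) i ((e:ℤ)*M)
          + (if i = 0 ∧ j.1 + 1 = ℓ then 0 else if i = 0 then 1 else 0) := by
    intro j
    rw [Finset.card_image_of_injective _ (hinj j)]
    split_ifs with h h2
    · simp [cnt]
    · rw [card_Ico_filter e (B j) i ((e:ℤ)*M) hK' hK0' (hlo j) (hhi j), if_pos h2]
    · rw [card_Ico_filter e (B j) i ((e:ℤ)*M) hK' hK0' (hlo j) (hhi j), if_neg h2, add_zero]
  rw [cnt, hmain, Finset.card_biUnion hdisj]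
  rw [Finset.sum_congr rfl (fun j _ => hcard j), Finset.sum_add_distrib]
  have hcor : (∑ j : Fin ℓ, (if i = 0 ∧ j.1 + 1 = ℓ then 0 else if i = 0 then 1 else 0))
      = if i = 0 then ℓ - 1 else 0 := by
    by_cases hi0 : i = 0
    · simp only [hi0, true_and, if_pos]
      have h1 : (Finset.univ.filter (fun j : Fin ℓ => ¬ (j.1 + 1 = ℓ)))
          = Finset.univ \ {(⟨ℓ - 1, by omega⟩ : Fin ℓ)} := by
        ext j
        simp [Fin.ext_iff]
        omega
      calc (∑ j : Fin ℓ, if j.1 + 1 = ℓ then 0 else 1)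
          = ∑ j : Fin ℓ, (if ¬ (j.1 + 1 = ℓ) then 1 else 0) := by
            refine Finset.sum_congr rfl fun j _ => ?_
            by_cases h : j.1 + 1 = ℓ <;> simp [h]
        _ = (Finset.univ.filter (fun j : Fin ℓ => ¬ (j.1 + 1 = ℓ))).card :=
            (Finset.card_filter _ _).symm
        _ = ℓ - 1 := by
            rw [h1, Finset.card_sdiff_of_subset (by simp)]
            simp
    · simp [hi0]
  rw [hcor]
  push_cast [Nat.cast_sub hl]
  split_ifs <;> ring

/-- δ_i(U(B^{(1)}, …, B^{(ℓ)})) = Σ_j δ_i(B^{(j)}) + (ℓ − 1)·[i = 0]. -/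
theorem stmt7 (e ℓ : ℕ) (he : 2 ≤ e) (hl : 1 ≤ ℓ) (B : Fin ℓ → Set ℤ)
    (hB : ∀ j, IsBetaSet (B j)) (i : ZMod e) :
    deltaOf e i (uglovU e ℓ B) =
      (∑ j : Fin ℓ, deltaOf e i (B j)) + ((ℓ : ℤ) - 1) * (if i = 0 then 1 else 0) := by
  classical
  have he0 : 0 < e := by omega
  have he' : (0:ℤ) < (e:ℤ) := by exact_mod_cast he0
  have hl' : (0:ℤ) < (ℓ:ℤ) := by exact_mod_cast hl
  have he1 : (1:ℤ) ≤ (e:ℤ) := by exact_mod_cast he0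
  haveI : Nonempty (Fin ℓ) := ⟨⟨0, hl⟩⟩
  choose mb hmb1 hmb2 using fun j => (hB j).1
  choose nb hnb1 hnb2 using fun j => (hB j).2
  set S : ℤ := Finset.univ.sup' Finset.univ_nonempty (fun j => max (mb j) (-(nb j))) with hS
  set M : ℤ := max S 0 + 2 with hMdef
  have hM : 0 < M := by
    have := le_max_right S 0
    omega
  have hSle : ∀ j, mb j ≤ M - 2 ∧ -(nb j) ≤ M - 2 := by
    intro j
    have h1 : max (mb j) (-(nb j)) ≤ S := by
      rw [hS]
      exact Finset.le_sup' (fun j => max (mb j) (-(nb j))) (Finset.mem_univ j)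
    have h2 := le_max_left (mb j) (-(nb j))
    have h3 := le_max_right (mb j) (-(nb j))
    have h4 := le_max_left S 0
    constructor <;> omega
  have hMe : M ≤ (e:ℤ) * M := le_mul_of_one_le_left hM.le he1
  have hhiB : ∀ j, ∀ x ∈ B j, x < (e:ℤ) * M := by
    intro j x hx
    have := hmb2 j x hx
    have := (hSle j).1
    omega
  have hloB : ∀ j, ∀ x : ℤ, x ≤ (e:ℤ) - (e:ℤ) * M → x ∈ B j := by
    intro j x hx
    by_contra hc
    have h1 := hnb2 j x hc
    have h2 := (hSle j).2
    have hE : (M - 1) ≤ (e:ℤ) * (M - 1) := le_mul_of_one_le_left (by omega) he1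
    have : (e:ℤ) - (e:ℤ) * M = -((e:ℤ) * (M - 1)) := by ring
    omega
  have hloB' : ∀ j, ∀ x : ℤ, x ≤ -((e:ℤ) * M) → x ∈ B j := by
    intro j x hx
    exact hloB j x (by omega)
  have hhiU : ∀ x ∈ uglovU e ℓ B, x < (e:ℤ) * ℓ * M := by
    intro x hx
    rw [uglovU, Set.mem_iUnion] at hx
    obtain ⟨j, y, hyB, rfl⟩ := hx
    have hyM := hhiB j y hyB
    obtain ⟨hb1, hb2⟩ := emod_bounds e he0 y
    obtain ⟨hr1, hr2⟩ := upsilon_r_bounds e ℓ (j.1 + 1) he0 (by omega) j.2 y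
    have hy := Int.mul_ediv_add_emod y (e:ℤ)
    have hy2 : y / (e:ℤ) < M := by
      refine (window_lt he' hb1 hb2).mp ?_
      rw [Int.mul_ediv_add_emod]
      exact hyM
    rw [upsilon_eq]
    nlinarith [mul_le_mul_of_nonneg_left (show y / (e:ℤ) ≤ M - 1 by omega)
      (by positivity : (0:ℤ) ≤ (e:ℤ) * (ℓ:ℤ))]
  have hloU : ∀ x : ℤ, x ≤ -((e:ℤ) * ℓ * M) → x ∈ uglovU e ℓ B := by
    intro x hx
    have hd : (0:ℤ) < (e:ℤ) * (ℓ:ℤ) := by positivity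
    have hxd := Int.mul_ediv_add_emod x ((e:ℤ) * ℓ)
    have hx1 : 0 ≤ x % ((e:ℤ) * ℓ) := Int.emod_nonneg x hd.ne'
    have hx2 : x % ((e:ℤ) * ℓ) < (e:ℤ) * ℓ := Int.emod_lt_of_pos x hd
    set A := x / ((e:ℤ) * ℓ) with hA
    set r := x % ((e:ℤ) * ℓ) with hr
    have hrd := Int.mul_ediv_add_emod r (e:ℤ)
    have hrb1 : 0 ≤ r % (e:ℤ) := Int.emod_nonneg r he'.ne'
    have hrb2 : r % (e:ℤ) < (e:ℤ) := Int.emod_lt_of_pos r he'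
    set c := r / (e:ℤ) with hc
    set b := r % (e:ℤ) with hb
    have hc0 : 0 ≤ c := Int.ediv_nonneg hx1 he'.le
    have hcl : c < (ℓ:ℤ) := by
      rw [hc, Int.ediv_lt_iff_lt_mul he']
      nlinarith
    have hctn : (c.toNat : ℤ) = c := Int.toNat_of_nonneg hc0
    have hctl : c.toNat < ℓ := by omega
    set jf : Fin ℓ := ⟨ℓ - 1 - c.toNat, by omega⟩ with hjf
    set y := (e:ℤ) * A + b with hy
    have hyd : y / (e:ℤ) = A := by
      rw [hy, show (e:ℤ) * A + b = b + A * (e:ℤ) from by ring,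
        Int.add_mul_ediv_right _ _ he'.ne', Int.ediv_eq_zero_of_lt hrb1 hrb2, zero_add]
    have hym : y % (e:ℤ) = b := by
      rw [Int.emod_def, hyd, hy]
      ring
    have hAM : A ≤ -M := by
      have h1 : (e:ℤ) * ℓ * A ≤ (e:ℤ) * ℓ * (-M) := by linarith
      exact le_of_mul_le_mul_left h1 hd
    have hyB : y ∈ B jf := by
      apply hloB
      have : (e:ℤ) * A ≤ (e:ℤ) * (-M) := mul_le_mul_of_nonneg_left hAM he'.le
      have h2 : (e:ℤ) * (-M) = -((e:ℤ) * M) := by ring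
      omega
    have hup : upsilon e ℓ (jf.1 + 1) y = x := by
      rw [upsilon_eq, hyd, hym]
      have hcast : ((jf.1 + 1 : ℕ) : ℤ) = (ℓ:ℤ) - c := by
        have : jf.1 = ℓ - 1 - c.toNat := rfl
        omega
      rw [hcast]
      have : (ℓ:ℤ) - ((ℓ:ℤ) - c) = c := by ring
      rw [this]
      have hrec : c * (e:ℤ) + b = r := by
        rw [hc, hb]
        linarith [Int.mul_ediv_add_emod r (e:ℤ)]
      rw [hrec]
      linarith
    rw [uglovU, Set.mem_iUnion]
    exact ⟨jf, y, hyB, hup⟩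
  have hKpos : (0:ℤ) < (e:ℤ) * ℓ * M := by positivity
  have hK'pos : (0:ℤ) < (e:ℤ) * M := by positivity
  have hK0 : (((e:ℤ) * ℓ * M : ℤ) : ZMod e) = 0 := by
    push_cast
    simp [ZMod.natCast_self]
  have hK0' : (((e:ℤ) * M : ℤ) : ZMod e) = 0 := by
    push_cast
    simp [ZMod.natCast_self]
  have h1 := deltaOf_eq_cnt e (uglovU e ℓ B) i ((e:ℤ) * ℓ * M) hKpos hK0 hloU hhiU
  have h2 : ∀ j, deltaOf e i (B j) = (cnt e (B j) i ((e:ℤ) * M) : ℤ)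
      - (cnt e (B j) (i - 1) ((e:ℤ) * M) : ℤ) - (if i = 1 then 1 else 0) :=
    fun j => deltaOf_eq_cnt e (B j) i ((e:ℤ) * M) hK'pos hK0' (hloB' j) (hhiB j)
  have hmemlo : ∀ j, -((e:ℤ) * M) ∈ B j := fun j => hloB' j _ le_rfl
  have hmemhi : ∀ j, ((e:ℤ) * M) ∉ B j := fun j h => absurd (hhiB j _ h) (lt_irrefl _)
  have h3 := cnt_uglov e ℓ he0 hl B M hM hmemlo hmemhi i
  have h4 := cnt_uglov e ℓ he0 hl B M hM hmemlo hmemhi (i - 1)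
  rw [h1, h3, h4,
    show (∑ j : Fin ℓ, deltaOf e i (B j))
        = ∑ j : Fin ℓ, ((cnt e (B j) i ((e:ℤ) * M) : ℤ)
          - (cnt e (B j) (i - 1) ((e:ℤ) * M) : ℤ) - (if i = 1 then 1 else 0))
      from Finset.sum_congr rfl fun j _ => h2 j]
  rw [Finset.sum_sub_distrib, Finset.sum_sub_distrib, Finset.sum_const,
    Finset.card_univ, Fintype.card_fin, nsmul_eq_mul]
  have hii : (if i - 1 = 0 then (1:ℤ) else 0) = if i = 1 then 1 else 0 := by
    simp [sub_eq_zero]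
  rw [hii]
  split_ifs <;> ring
end

section
/- Assume ℓ ≥ 2. For every ℓ-partition λ = (λ^{(1)}, …, λ^{(ℓ)}) and every multicharge t = (t_1, …, t_ℓ) ∈ ℤ^ℓ, U((λ^{(2)}, …, λ^{(ℓ)}, λ^{(1)}); (t_2, …, t_ℓ, t_1 + e)) = U(λ; t). -/
section Aux

/-- Tameness: bounded above, and contains everything sufficiently small. -/
def TameSet (B : Set ℤ) : Prop :=
  (∃ M : ℤ, ∀ x ∈ B, x ≤ M) ∧ (∃ m : ℤ, ∀ x : ℤ, x < m → x ∈ B)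

lemma mem_shiftSet {B : Set ℤ} {k x : ℤ} : x ∈ shiftSet B k ↔ x - k ∈ B := by
  constructor
  · rintro ⟨y, hy, rfl⟩; simpa using hy
  · intro h; exact ⟨x - k, h, by ring⟩

lemma shiftSet_shiftSet (B : Set ℤ) (a b : ℤ) :
    shiftSet (shiftSet B a) b = shiftSet B (a + b) := by
  ext x; rw [mem_shiftSet, mem_shiftSet, mem_shiftSet, sub_sub, add_comm b a]

lemma shiftSet_zero (B : Set ℤ) : shiftSet B 0 = B := by
  ext x; simp [mem_shiftSet]

lemma shiftSet_injOn (k : ℤ) {A B : Set ℤ} (h : shiftSet A k = shiftSet B k) : A = B := by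
  have := congrArg (fun S => shiftSet S (-k)) h
  simpa [shiftSet_shiftSet, shiftSet_zero] using this

lemma tame_shiftSet {B : Set ℤ} (h : TameSet B) (k : ℤ) : TameSet (shiftSet B k) := by
  obtain ⟨⟨M, hM⟩, ⟨m, hm⟩⟩ := h
  refine ⟨⟨M + k, ?_⟩, ⟨m + k, ?_⟩⟩
  · intro x hx; have := hM _ (mem_shiftSet.1 hx); omega
  · intro x hx; exact mem_shiftSet.2 (hm _ (by omega))

lemma tame_betaOf {p : ℕ → ℕ} (hp : IsPartitionFun p) (c : ℤ) : TameSet (betaOf p c) := by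
  obtain ⟨hmono, N, hN⟩ := hp
  constructor
  · refine ⟨(p 0 : ℤ) + c, ?_⟩
    rintro x ⟨a, rfl⟩
    have := hmono 0 a (Nat.zero_le a)
    omega
  · refine ⟨c - N, ?_⟩
    intro x hx
    refine ⟨(c - 1 - x).toNat, ?_⟩
    have h1 : (N : ℤ) ≤ c - 1 - x := by omega
    have h2 : ((c - 1 - x).toNat : ℤ) = c - 1 - x := Int.toNat_of_nonneg (by omega)
    have h3 : p (c - 1 - x).toNat = 0 := hN _ (by omega)
    omega

lemma charge_eq_ncard (B : Set ℤ) (M m N : ℤ) (hM : ∀ x ∈ B, x ≤ M)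
    (hm : ∀ x : ℤ, x < m → x ∈ B) (hN0 : 0 ≤ N) (hNm : -N ≤ m) :
    charge B = ((B ∩ Set.Icc (-N) M).ncard : ℤ) - N := by
  have h1 : B ∩ {x : ℤ | 0 ≤ x} = B ∩ Set.Icc 0 M := by
    ext x; simp only [Set.mem_inter_iff, Set.mem_setOf_eq, Set.mem_Icc]
    exact ⟨fun ⟨hb, hx⟩ => ⟨hb, hx, hM x hb⟩, fun ⟨hb, hx, _⟩ => ⟨hb, hx⟩⟩
  have h2 : {x : ℤ | x < 0} \ B = Set.Ico (-N) 0 \ B := by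
    ext x; simp only [Set.mem_diff, Set.mem_setOf_eq, Set.mem_Ico]
    constructor
    · rintro ⟨hx, hb⟩
      have : ¬ x < m := fun h => hb (hm x h)
      exact ⟨⟨by omega, hx⟩, hb⟩
    · rintro ⟨⟨_, hx⟩, hb⟩; exact ⟨hx, hb⟩
  have h3 : B ∩ Set.Icc (-N) M = (B ∩ Set.Icc 0 M) ∪ (B ∩ Set.Ico (-N) 0) := by
    ext x; simp only [Set.mem_inter_iff, Set.mem_Icc, Set.mem_union, Set.mem_Ico]
    constructor
    · rintro ⟨hb, h, h'⟩
      rcases le_or_gt 0 x with hx | hx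
      · exact Or.inl ⟨hb, hx, h'⟩
      · exact Or.inr ⟨hb, h, hx⟩
    · rintro (⟨hb, h, h'⟩ | ⟨hb, h, h'⟩)
      · exact ⟨hb, by omega, h'⟩
      · exact ⟨hb, h, hM x hb⟩
  have h4 : B ∩ Set.Ico (-N) 0 = Set.Ico (-N) 0 \ (Set.Ico (-N) 0 \ B) := by
    ext x; simp only [Set.mem_inter_iff, Set.mem_diff]; tauto
  have hfinIco : (Set.Ico (-N : ℤ) 0).Finite := Set.finite_Ico _ _
  have hfinIcc : (Set.Icc (0 : ℤ) M).Finite := Set.finite_Icc _ _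
  have hfin1 : (B ∩ Set.Icc 0 M).Finite := hfinIcc.inter_of_right _
  have hfin2 : (B ∩ Set.Ico (-N) 0).Finite := hfinIco.inter_of_right _
  have hsub : Set.Ico (-N : ℤ) 0 \ B ⊆ Set.Ico (-N) 0 := Set.diff_subset
  have hdiffcard : (Set.Ico (-N : ℤ) 0 \ (Set.Ico (-N) 0 \ B)).ncard
      + (Set.Ico (-N : ℤ) 0 \ B).ncard = (Set.Ico (-N : ℤ) 0).ncard :=
    Set.ncard_diff_add_ncard_of_subset hsub hfinIco
  have hIcoCard : (Set.Ico (-N : ℤ) 0).ncard = N.toNat := by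
    rw [← Finset.coe_Ico, Set.ncard_coe_finset, Int.card_Ico]
    simp
  have hdisj : Disjoint (B ∩ Set.Icc 0 M) (B ∩ Set.Ico (-N) 0) := by
    rw [Set.disjoint_left]
    rintro x ⟨_, hx, _⟩ ⟨_, _, hx'⟩
    omega
  have hunion : (B ∩ Set.Icc (-N) M).ncard
      = (B ∩ Set.Icc 0 M).ncard + (B ∩ Set.Ico (-N) 0).ncard := by
    rw [h3]; exact Set.ncard_union_eq hdisj hfin1 hfin2
  unfold charge
  rw [h1, h2, hunion, h4]
  have := hdiffcard
  omega

lemma charge_shiftSet {B : Set ℤ} (h : TameSet B) (k : ℤ) :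
    charge (shiftSet B k) = charge B + k := by
  obtain ⟨⟨M, hM⟩, ⟨m, hm⟩⟩ := h
  set N : ℤ := max (-m) 0 + |k| with hNdef
  have hN0 : 0 ≤ N := by positivity
  have hNm : -N ≤ m := by
    have := le_max_left (-m) 0; have := abs_nonneg k; omega
  have e1 := charge_eq_ncard B M m N hM hm hN0 hNm
  have hM' : ∀ x ∈ shiftSet B k, x ≤ M + k := by
    intro x hx; have := hM _ (mem_shiftSet.1 hx); omega
  have hm' : ∀ x : ℤ, x < m + k → x ∈ shiftSet B k := by
    intro x hx; exact mem_shiftSet.2 (hm _ (by omega))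
  have habs : k ≤ |k| ∧ -|k| ≤ k := ⟨le_abs_self k, neg_abs_le k⟩
  have e2 := charge_eq_ncard (shiftSet B k) (M + k) (m + k) (N - k) hM' hm'
    (by have := le_max_right (-m) 0; omega) (by omega)
  have himg : shiftSet B k ∩ Set.Icc (-(N - k)) (M + k)
      = (fun x => x + k) '' (B ∩ Set.Icc (-N) M) := by
    ext x
    simp only [Set.mem_inter_iff, mem_shiftSet, Set.mem_Icc, Set.mem_image]
    constructor
    · rintro ⟨hb, h1, h2⟩
      exact ⟨x - k, ⟨hb, by omega, by omega⟩, by ring⟩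
    · rintro ⟨y, ⟨hb, h1, h2⟩, rfl⟩
      exact ⟨by simpa using hb, by omega, by omega⟩
  have hcard : (shiftSet B k ∩ Set.Icc (-(N - k)) (M + k)).ncard
      = (B ∩ Set.Icc (-N) M).ncard := by
    rw [himg]; exact Set.ncard_image_of_injective _ (add_left_injective k)
  omega

lemma betaOf_add (p : ℕ → ℕ) (c k : ℤ) : betaOf p (c + k) = shiftSet (betaOf p c) k := by
  ext x
  simp only [betaOf, mem_shiftSet, Set.mem_setOf_eq]
  constructor
  · rintro ⟨a, rfl⟩; exact ⟨a, by ring⟩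
  · rintro ⟨a, ha⟩; exact ⟨a, by omega⟩

lemma betaInv_shiftSet (B : Set ℤ) (k : ℤ) : betaInv (shiftSet B k) = betaInv B := by
  have key : (fun p : ℕ → ℕ => IsPartitionFun p ∧
        betaOf p (charge (shiftSet B k)) = shiftSet B k)
      = (fun p : ℕ → ℕ => IsPartitionFun p ∧ betaOf p (charge B) = B) := by
    funext p
    apply propext
    constructor
    · rintro ⟨hp, hb⟩
      refine ⟨hp, ?_⟩
      have htame : TameSet (shiftSet B k) := hb ▸ tame_betaOf hp _
      have hch : charge B = charge (shiftSet B k) - k := by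
        have h2 := charge_shiftSet htame (-k)
        rw [shiftSet_shiftSet] at h2
        simpa [shiftSet_zero, sub_eq_add_neg] using h2
      apply shiftSet_injOn k
      rw [← betaOf_add, ← hb, hch]
      ring_nf
    · rintro ⟨hp, hb⟩
      refine ⟨hp, ?_⟩
      have htame : TameSet B := hb ▸ tame_betaOf hp _
      rw [charge_shiftSet htame k, betaOf_add, hb]
  unfold betaInv
  rw [key]

lemma upsilon_succ (e ℓ j : ℕ) (x : ℤ) :
    upsilon e ℓ (j + 1) x + (e : ℤ) = upsilon e ℓ j x := by
  unfold upsilon; push_cast; ring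

lemma upsilon_last (e ℓ : ℕ) (x : ℤ) :
    upsilon e ℓ ℓ (x + (e : ℤ)) = upsilon e ℓ 1 x + (e : ℤ) := by
  have hmod : (x + (e : ℤ)) % (e : ℤ) = x % (e : ℤ) := by
    simpa using Int.add_mul_emod_self_left (a := x) (b := (e : ℤ)) (c := 1)
  unfold upsilon
  rw [hmod]; push_cast; ring

end Aux

/-- U((λ^{(2)}, …, λ^{(ℓ)}, λ^{(1)}); (t_2, …, t_ℓ, t_1 + e)) = U(λ; t). -/
theorem stmt9 (e ℓ : ℕ) (he : 2 ≤ e) (hl : 2 ≤ ℓ) (Λ : Fin ℓ → ℕ → ℕ)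
    (hΛ : ∀ j, IsPartitionFun (Λ j)) (t : Fin ℓ → ℤ) :
    uglovPart e ℓ
      (fun j => if h : j.1 + 1 < ℓ then Λ ⟨j.1 + 1, h⟩ else Λ ⟨0, by omega⟩)
      (fun j => if h : j.1 + 1 < ℓ then t ⟨j.1 + 1, h⟩ else t ⟨0, by omega⟩ + (e : ℤ)) =
    uglovPart e ℓ Λ t := by
  have hl0 : 0 < ℓ := by omega
  unfold uglovPart
  suffices h : uglovMulti e ℓ
      (fun j => if h : j.1 + 1 < ℓ then Λ ⟨j.1 + 1, h⟩ else Λ ⟨0, by omega⟩)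
      (fun j => if h : j.1 + 1 < ℓ then t ⟨j.1 + 1, h⟩ else t ⟨0, by omega⟩ + (e : ℤ))
      = shiftSet (uglovMulti e ℓ Λ t) (e : ℤ) by
    rw [h, betaInv_shiftSet]
  unfold uglovMulti uglovU shiftSet
  rw [Set.image_iUnion]
  set σ : Fin ℓ → Fin ℓ := fun j => if h : j.1 + 1 < ℓ then ⟨j.1 + 1, h⟩ else ⟨0, hl0⟩
    with hσ
  have hsurj : Function.Surjective σ := by
    intro i
    by_cases hi : i.1 = 0
    · refine ⟨⟨ℓ - 1, by omega⟩, ?_⟩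
      simp only [hσ]
      rw [dif_neg (by omega)]
      exact Fin.ext (by simpa using hi.symm)
    · refine ⟨⟨i.1 - 1, by omega⟩, ?_⟩
      simp only [hσ]
      rw [dif_pos (by omega : (i.1 - 1) + 1 < ℓ)]
      exact Fin.ext (by simp; omega)
  rw [← hsurj.iUnion_comp
    (fun i => (fun x => x + (e : ℤ)) '' (upsilon e ℓ (i.1 + 1) '' betaOf (Λ i) (t i)))]
  apply Set.iUnion_congr
  intro j
  by_cases hj : j.1 + 1 < ℓ
  · simp only [hσ, dif_pos hj]
    rw [Set.image_image]
    exact Set.image_congr' (fun x => (upsilon_succ e ℓ (j.1 + 1) x).symm)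
  · have hj' : j.1 + 1 = ℓ := by omega
    simp only [hσ, dif_neg hj]
    rw [show upsilon e ℓ (j.1 + 1) = upsilon e ℓ ℓ from by rw [hj'], betaOf_add]
    unfold shiftSet
    rw [Set.image_image, Set.image_image]
    exact Set.image_congr' (fun x => upsilon_last e ℓ x)
end
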